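/- arXiv:2602.04383 — 4 statements merged into one kernel-verified Lean document; each statement's English description precedes it below -/
import Mathlib

section
/- Let Z be a standard Gaussian random variable and define φ(l) = E[log cosh(√(2l)·Z)] for l ≥ 0. Then φ(l) = l − l² + o(l²) as l → 0⁺; precisely, (φ(l) − l + l²)/l² tends to 0 as l tends to 0 from the right. -/
open Real Filter MeasureTheory ProbabilityTheory


lemma nonneg_of_deriv {f f' : ℝ → ℝ} (hd : ∀ x, HasDerivAt f (f' x) x)
    (h0 : f 0 = 0) (hf' : ∀ x, 0 ≤ x → 0 ≤ f' x) : ∀ x, 0 ≤ x → 0 ≤ f x := by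
  intro x hx
  have hm : MonotoneOn f (Set.Ici (0:ℝ)) := by
    refine monotoneOn_of_deriv_nonneg (convex_Ici 0)
      (fun y _ => (hd y).continuousAt.continuousWithinAt)
      (fun y _ => (hd y).differentiableAt.differentiableWithinAt) ?_
    intro y hy
    rw [(hd y).deriv]
    rw [interior_Ici] at hy
    exact hf' y hy.le
  have := hm Set.self_mem_Ici hx hx
  linarith

lemma hasDerivAt_tanh' (x : ℝ) : HasDerivAt Real.tanh (1 - Real.tanh x ^ 2) x := by
  have h := ((Real.hasDerivAt_sinh x).div (Real.hasDerivAt_cosh x) (Real.cosh_pos x).ne')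
  have : ∀ y : ℝ, Real.tanh y = Real.sinh y / Real.cosh y := fun y => Real.tanh_eq_sinh_div_cosh y
  rw [show Real.tanh = fun y => Real.sinh y / Real.cosh y from funext this]
  refine h.congr_deriv ?_
  have hc := (Real.cosh_pos x).ne'
  have hid : Real.cosh x ^ 2 - Real.sinh x ^ 2 = 1 := Real.cosh_sq_sub_sinh_sq x
  field_simp [Real.tanh_eq_sinh_div_cosh]

lemma tanh_nonneg {x : ℝ} (hx : 0 ≤ x) : 0 ≤ Real.tanh x := by
  rw [Real.tanh_eq_sinh_div_cosh]
  exact div_nonneg ((Real.sinh_nonneg_iff.mpr hx)) (Real.cosh_pos x).le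

lemma tanh_le_self {x : ℝ} (hx : 0 ≤ x) : Real.tanh x ≤ x := by
  have := nonneg_of_deriv (f := fun x => x - Real.tanh x)
    (f' := fun x => Real.tanh x ^ 2)
    (fun y => ((hasDerivAt_id y).sub (hasDerivAt_tanh' y)).congr_deriv (by simp))
    (by simp) (fun y _ => sq_nonneg _) x hx
  beta_reduce at this
  linarith

lemma tanh_ge {x : ℝ} (hx : 0 ≤ x) : x - x^3/3 ≤ Real.tanh x := by
  have := nonneg_of_deriv (f := fun x => Real.tanh x - x + x^3/3)
    (f' := fun x => x^2 - Real.tanh x ^ 2)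
    (fun y => by
      have := ((hasDerivAt_tanh' y).sub (hasDerivAt_id y)).add
        (((hasDerivAt_pow 3 y).div_const 3))
      refine this.congr_deriv ?_
      push_cast; ring)
    (by simp) ?_ x hx
  · beta_reduce at this
    linarith
  · intro y hy
    have h1 := tanh_le_self hy
    have h2 := tanh_nonneg hy
    beta_reduce
    nlinarith

lemma tanh_le {x : ℝ} (hx : 0 ≤ x) : Real.tanh x ≤ x - x^3/3 + 2*x^5/15 := by
  have := nonneg_of_deriv (f := fun x => x - x^3/3 + 2*x^5/15 - Real.tanh x)
    (f' := fun x => Real.tanh x ^ 2 - x^2 + 2*x^4/3)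
    (fun y => by
      have := (((hasDerivAt_id y).sub ((hasDerivAt_pow 3 y).div_const 3)).add
        (((hasDerivAt_pow 5 y).const_mul 2).div_const 15)).sub (hasDerivAt_tanh' y)
      refine this.congr_deriv ?_
      push_cast; ring)
    (by simp) ?_ x hx
  · beta_reduce at this
    linarith
  · intro y hy
    beta_reduce
    rcases le_or_gt (y^2) (3/2) with h | h
    · have h1 := tanh_ge hy
      have h3 : 0 ≤ y - y^3/3 := by nlinarith
      nlinarith [mul_le_mul h1 h1 h3 (h3.trans h1), sq_nonneg (y^3)]
    · nlinarith [sq_nonneg (Real.tanh y)]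

lemma logcosh_deriv (x : ℝ) : HasDerivAt (fun x => Real.log (Real.cosh x)) (Real.tanh x) x := by
  have := (Real.hasDerivAt_cosh x).log (Real.cosh_pos x).ne'
  simpa [Real.tanh_eq_sinh_div_cosh] using this

lemma logcosh_ge {x : ℝ} (hx : 0 ≤ x) :
    x^2/2 - x^4/12 ≤ Real.log (Real.cosh x) := by
  have := nonneg_of_deriv (f := fun x => Real.log (Real.cosh x) - x^2/2 + x^4/12)
    (f' := fun x => Real.tanh x - x + x^3/3)
    (fun y => by
      have := ((logcosh_deriv y).sub ((hasDerivAt_pow 2 y).div_const 2)).add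
        ((hasDerivAt_pow 4 y).div_const 12)
      refine this.congr_deriv ?_
      push_cast; ring)
    (by simp) (fun y hy => by have := tanh_ge hy; beta_reduce; linarith) x hx
  beta_reduce at this
  linarith

lemma logcosh_le {x : ℝ} (hx : 0 ≤ x) :
    Real.log (Real.cosh x) ≤ x^2/2 - x^4/12 + x^6/45 := by
  have := nonneg_of_deriv (f := fun x => x^2/2 - x^4/12 + x^6/45 - Real.log (Real.cosh x))
    (f' := fun x => x - x^3/3 + 2*x^5/15 - Real.tanh x)
    (fun y => by
      have := (((hasDerivAt_pow 2 y).div_const 2).sub ((hasDerivAt_pow 4 y).div_const 12)).add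
        ((hasDerivAt_pow 6 y).div_const 45) |>.sub (logcosh_deriv y)
      refine this.congr_deriv ?_
      push_cast; ring)
    (by simp) (fun y hy => by have := tanh_le hy; beta_reduce; linarith) x hx
  beta_reduce at this
  linarith

lemma logcosh_le_half_sq (x : ℝ) : Real.log (Real.cosh x) ≤ x^2/2 := by
  have key : ∀ y, 0 ≤ y → Real.log (Real.cosh y) ≤ y^2/2 := by
    intro y hy
    have := nonneg_of_deriv (f := fun x => x^2/2 - Real.log (Real.cosh x))
      (f' := fun x => x - Real.tanh x)
      (fun z => by
        have := ((hasDerivAt_pow 2 z).div_const 2).sub (logcosh_deriv z)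
        refine this.congr_deriv ?_
        push_cast; ring)
      (by simp) (fun z hz => by have := tanh_le_self hz; beta_reduce; linarith) y hy
    beta_reduce at this
    linarith
  have := key |x| (abs_nonneg x)
  rwa [Real.cosh_abs, sq_abs] at this

lemma logcosh_nonneg (x : ℝ) : 0 ≤ Real.log (Real.cosh x) :=
  Real.log_nonneg (Real.one_le_cosh x)

lemma logcosh_ge' (x : ℝ) : x^2/2 - x^4/12 ≤ Real.log (Real.cosh x) := by
  have := logcosh_ge (abs_nonneg x)
  rwa [Real.cosh_abs, sq_abs, Even.pow_abs (⟨2, by norm_num⟩ : Even 4)] at this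

lemma logcosh_le' (x : ℝ) : Real.log (Real.cosh x) ≤ x^2/2 - x^4/12 + x^6/45 := by
  have := logcosh_le (abs_nonneg x)
  rwa [Real.cosh_abs, sq_abs, Even.pow_abs (⟨2, by norm_num⟩ : Even 4), Even.pow_abs (⟨3, by norm_num⟩ : Even 6)] at this


lemma ipow (n : ℕ) : Integrable (fun x : ℝ => x ^ n * Real.exp (-(1/2) * x^2)) := by
  have h := integrable_rpow_mul_exp_neg_mul_sq (by norm_num : (0:ℝ) < 1/2)
    (lt_of_lt_of_le (by norm_num) (Nat.cast_nonneg n) : (-1:ℝ) < (n:ℝ))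
  simpa [Real.rpow_natCast] using h

lemma tend0 (n : ℕ) (F : Filter ℝ) (hF : F ≤ Filter.cocompact ℝ) :
    Tendsto (fun x : ℝ => -(x ^ n * Real.exp (-(1/2) * x^2))) F (nhds 0) := by
  have h := tendsto_rpow_abs_mul_exp_neg_mul_sq_cocompact (by norm_num : (0:ℝ) < 1/2) n
  have h2 : Tendsto (fun x : ℝ => |x| ^ (n:ℝ) * Real.exp (-(1/2) * x ^ 2)) F (nhds 0) :=
    h.mono_left hF
  refine squeeze_zero_norm (fun x => ?_) h2
  rw [norm_neg, norm_mul, Real.norm_eq_abs, Real.norm_eq_abs, abs_pow,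
    Real.abs_exp, Real.rpow_natCast]

lemma gauss_rec (n : ℕ) :
    ∫ x : ℝ, x ^ (n+2) * Real.exp (-(1/2) * x^2)
      = (n+1) * ∫ x : ℝ, x ^ n * Real.exp (-(1/2) * x^2) := by
  set e : ℝ → ℝ := fun x => Real.exp (-(1/2) * x^2) with he
  have hde : ∀ x : ℝ, HasDerivAt e (-x * e x) x := by
    intro x
    have h1 : HasDerivAt (fun x : ℝ => -(1/2) * x^2) (-(1/2) * (2*x^(2-1))) x :=
      (hasDerivAt_pow 2 x).const_mul _
    have := h1.exp
    convert this using 1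
    simp [he]; ring
  have hdF : ∀ x : ℝ, HasDerivAt (fun x => -(x^(n+1) * e x))
      (x^(n+2) * e x - (n+1) * (x^n * e x)) x := by
    intro x
    have := ((hasDerivAt_pow (n+1) x).mul (hde x)).neg
    refine this.congr_deriv ?_
    push_cast [Nat.add_sub_cancel]
    ring
  have hint : Integrable (fun x : ℝ => x^(n+2) * e x - (n+1) * (x^n * e x)) :=
    (ipow (n+2)).sub ((ipow n).const_mul _)
  have hz := integral_of_hasDerivAt_of_tendsto hdF hint
    (tend0 (n+1) atBot _root_.atBot_le_cocompact)
    (tend0 (n+1) atTop _root_.atTop_le_cocompact)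
  rw [sub_zero, integral_sub (ipow (n+2)) ((ipow n).const_mul _),
    integral_const_mul] at hz
  linarith [hz]

lemma gauss0 : ∫ x : ℝ, Real.exp (-(1/2) * x^2) = Real.sqrt (2*π) := by
  rw [integral_gaussian (1/2)]
  congr 1
  ring

lemma sqrt2pi_pos : 0 < Real.sqrt (2*π) := Real.sqrt_pos.mpr (by positivity)

lemma pdf_eq (x : ℝ) :
    gaussianPDFReal 0 1 x = (Real.sqrt (2*π))⁻¹ * Real.exp (-(1/2) * x^2) := by
  rw [gaussianPDFReal]
  rw [show (2*π*((1 : NNReal) : ℝ)) = 2*π by norm_num,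
    show (-(x-0)^2/(2*((1 : NNReal) : ℝ))) = -(1/2)*x^2 by norm_num; ring]

lemma pdf_meas : Measurable fun x => (gaussianPDFReal 0 1 x).toNNReal :=
  (measurable_gaussianPDFReal 0 1).real_toNNReal

lemma gauss_dens : gaussianReal 0 1
    = MeasureTheory.Measure.withDensity MeasureTheory.volume
      (fun x => ((gaussianPDFReal 0 1 x).toNNReal : ENNReal)) := by
  rw [gaussianReal_of_var_ne_zero 0 one_ne_zero]
  rfl

lemma gauss_int (g : ℝ → ℝ) :
    ∫ x, g x ∂(gaussianReal 0 1)
      = (Real.sqrt (2*π))⁻¹ * ∫ x, g x * Real.exp (-(1/2) * x^2) := by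
  rw [gauss_dens, integral_withDensity_eq_integral_smul pdf_meas g, ← integral_const_mul]
  congr 1
  funext x
  rw [NNReal.smul_def, Real.coe_toNNReal _ (gaussianPDFReal_nonneg 0 1 x), smul_eq_mul, pdf_eq]
  ring

lemma gauss_integrable (g : ℝ → ℝ)
    (hg : Integrable (fun x => g x * Real.exp (-(1/2) * x^2))) :
    Integrable g (gaussianReal 0 1) := by
  rw [gauss_dens, integrable_withDensity_iff_integrable_smul pdf_meas]
  have := hg.const_mul ((Real.sqrt (2*π))⁻¹)
  refine this.congr (Filter.Eventually.of_forall fun x => ?_)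
  beta_reduce
  rw [NNReal.smul_def, Real.coe_toNNReal _ (gaussianPDFReal_nonneg 0 1 x), smul_eq_mul, pdf_eq]
  ring

lemma m0 : ∫ x : ℝ, x^0 * Real.exp (-(1/2) * x^2) = Real.sqrt (2*π) := by
  simpa using gauss0

lemma m2 : ∫ x, x^2 ∂(gaussianReal 0 1) = 1 := by
  rw [gauss_int, show ((2:ℕ):ℕ) = 0 + 2 from rfl]
  rw [show (fun x : ℝ => x ^ 2 * Real.exp (-(1/2) * x^2))
      = fun x : ℝ => x ^ (0+2) * Real.exp (-(1/2) * x^2) by norm_num]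
  rw [gauss_rec 0, m0]
  rw [inv_mul_eq_div]
  field_simp
  norm_num

lemma m4 : ∫ x, x^4 ∂(gaussianReal 0 1) = 3 := by
  rw [gauss_int]
  rw [show (fun x : ℝ => x ^ 4 * Real.exp (-(1/2) * x^2))
      = fun x : ℝ => x ^ (2+2) * Real.exp (-(1/2) * x^2) by norm_num]
  rw [gauss_rec 2, show (fun x : ℝ => x ^ 2 * Real.exp (-(1/2) * x^2))
      = fun x : ℝ => x ^ (0+2) * Real.exp (-(1/2) * x^2) by norm_num, gauss_rec 0, m0]
  have := sqrt2pi_pos.ne'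
  field_simp
  ring

lemma m6 : ∫ x, x^6 ∂(gaussianReal 0 1) = 15 := by
  rw [gauss_int]
  rw [show (fun x : ℝ => x ^ 6 * Real.exp (-(1/2) * x^2))
      = fun x : ℝ => x ^ (4+2) * Real.exp (-(1/2) * x^2) by norm_num]
  rw [gauss_rec 4, show (fun x : ℝ => x ^ 4 * Real.exp (-(1/2) * x^2))
      = fun x : ℝ => x ^ (2+2) * Real.exp (-(1/2) * x^2) by norm_num, gauss_rec 2,
    show (fun x : ℝ => x ^ 2 * Real.exp (-(1/2) * x^2))
      = fun x : ℝ => x ^ (0+2) * Real.exp (-(1/2) * x^2) by norm_num, gauss_rec 0, m0]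
  have := sqrt2pi_pos.ne'
  field_simp
  ring

lemma ig2 : Integrable (fun x => x^2) (gaussianReal 0 1) := gauss_integrable _ (ipow 2)
lemma ig4 : Integrable (fun x => x^4) (gaussianReal 0 1) := gauss_integrable _ (ipow 4)
lemma ig6 : Integrable (fun x => x^6) (gaussianReal 0 1) := gauss_integrable _ (ipow 6)


lemma key_bounds {l : ℝ} (hl : 0 < l) :
    0 ≤ (∫ x, Real.log (Real.cosh (Real.sqrt (2 * l) * x)) ∂(gaussianReal 0 1)) - l + l ^ 2 ∧
    (∫ x, Real.log (Real.cosh (Real.sqrt (2 * l) * x)) ∂(gaussianReal 0 1)) - l + l ^ 2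
      ≤ 8 / 3 * l ^ 3 := by
  set c := Real.sqrt (2 * l) with hc
  have hc2 : c ^ 2 = 2 * l := Real.sq_sqrt (by positivity)
  have h2 : ∀ x : ℝ, (c * x) ^ 2 = 2 * l * x ^ 2 := fun x => by rw [mul_pow, hc2]
  have h4 : ∀ x : ℝ, (c * x) ^ 4 = 4 * l ^ 2 * x ^ 4 := fun x => by
    rw [mul_pow, show c ^ 4 = (c ^ 2) ^ 2 by ring, hc2]; ring
  have h6 : ∀ x : ℝ, (c * x) ^ 6 = 8 * l ^ 3 * x ^ 6 := fun x => by
    rw [mul_pow, show c ^ 6 = (c ^ 2) ^ 3 by ring, hc2]; ring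
  have ilogc : Integrable (fun x => Real.log (Real.cosh (c * x))) (gaussianReal 0 1) := by
    refine Integrable.mono' ((ig2).const_mul l) ?_
      (Filter.Eventually.of_forall fun x => ?_)
    · exact ((Real.continuous_cosh.comp (continuous_const.mul continuous_id)).log
        (fun x => (Real.cosh_pos _).ne')).aestronglyMeasurable
    · rw [Real.norm_eq_abs, abs_of_nonneg (logcosh_nonneg _)]
      have := logcosh_le_half_sq (c * x)
      rw [h2 x] at this
      linarith
  have hsum : Integrable
      (fun x => Real.log (Real.cosh (c * x)) - l * x ^ 2 + l ^ 2 / 3 * x ^ 4)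
      (gaussianReal 0 1) :=
    (ilogc.sub ((ig2).const_mul l)).add ((ig4).const_mul (l ^ 2 / 3))
  have hsub : Integrable (fun x => Real.log (Real.cosh (c * x)) - l * x ^ 2)
      (gaussianReal 0 1) := ilogc.sub ((ig2).const_mul l)
  have hmul4 : Integrable (fun x : ℝ => l ^ 2 / 3 * x ^ 4) (gaussianReal 0 1) :=
    (ig4).const_mul _
  have hmul2 : Integrable (fun x : ℝ => l * x ^ 2) (gaussianReal 0 1) := (ig2).const_mul _
  have hI : ∫ x, (Real.log (Real.cosh (c * x)) - l * x ^ 2 + l ^ 2 / 3 * x ^ 4)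
        ∂(gaussianReal 0 1)
      = (∫ x, Real.log (Real.cosh (c * x)) ∂(gaussianReal 0 1)) - l + l ^ 2 := by
    rw [integral_add hsub hmul4, integral_sub ilogc hmul2, integral_const_mul,
      integral_const_mul, m2, m4]
    ring
  constructor
  · rw [← hI]
    refine integral_nonneg fun x => ?_
    have h := logcosh_ge' (c * x)
    rw [h2 x, h4 x] at h
    simp only [Pi.zero_apply]
    nlinarith [h]
  · rw [← hI]
    have hmono : ∫ x, (Real.log (Real.cosh (c * x)) - l * x ^ 2 + l ^ 2 / 3 * x ^ 4)
          ∂(gaussianReal 0 1)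
        ≤ ∫ x, (8 * l ^ 3 / 45 * x ^ 6) ∂(gaussianReal 0 1) := by
      refine integral_mono hsum ((ig6).const_mul _) fun x => ?_
      have h := logcosh_le' (c * x)
      rw [h2 x, h4 x, h6 x] at h
      beta_reduce
      nlinarith [h]
    rw [integral_const_mul, m6] at hmono
    linarith

/-- Let `Z` be a standard Gaussian and `φ l = E[log cosh(√(2l) Z)]`. Then
`φ l = l - l² + o(l²)` as `l → 0⁺`: `(φ l - l + l²) / l² → 0` as `l → 0⁺`. -/
theorem stmt_2 :
    Tendsto (fun l : ℝ =>
        ((∫ x, Real.log (Real.cosh (Real.sqrt (2 * l) * x)) ∂(gaussianReal 0 1))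
          - l + l ^ 2) / l ^ 2)
      (nhdsWithin 0 (Set.Ioi 0)) (nhds 0) := by
  have hG : Tendsto (fun l : ℝ => 8 / 3 * l) (nhdsWithin 0 (Set.Ioi 0)) (nhds 0) := by
    have : Tendsto (fun l : ℝ => 8 / 3 * l) (nhds 0) (nhds (8 / 3 * 0)) :=
      (continuous_const.mul continuous_id).tendsto 0
    rw [mul_zero] at this
    exact this.mono_left nhdsWithin_le_nhds
  refine squeeze_zero' ?_ ?_ hG
  · filter_upwards [self_mem_nhdsWithin] with l hl
    have hl' : 0 < l := hl
    exact div_nonneg (key_bounds hl').1 (by positivity)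
  · filter_upwards [self_mem_nhdsWithin] with l hl
    have hl' : 0 < l := hl
    rw [div_le_iff₀ (by positivity : (0:ℝ) < l ^ 2)]
    calc (∫ x, Real.log (Real.cosh (Real.sqrt (2 * l) * x)) ∂(gaussianReal 0 1)) - l + l ^ 2
        ≤ 8 / 3 * l ^ 3 := (key_bounds hl').2
      _ = 8 / 3 * l * l ^ 2 := by ring
end

section
/- For every real t > 0 and every integer p ≥ 3, there exists C₀ > 0 such that for all C ≥ C₀: E[log cosh(√(2/C)·Z)] − 1/C + t·((p−1)/p)·(1/(C²·t))^(p/(p−1)) < 0, where Z is a standard Gaussian random variable. -/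
open Real MeasureTheory ProbabilityTheory
open scoped ENNReal NNReal

/-- `sinh y / (y cosh y)` is antitone on `(0, ∞)`. -/
lemma aux_sinh_div_anti {s u : ℝ} (hs : 0 < s) (hsu : s ≤ u) :
    Real.sinh u / (u * Real.cosh u) ≤ Real.sinh s / (s * Real.cosh s) := by
  set q : ℝ → ℝ := fun y => Real.sinh y / (y * Real.cosh y) with hq
  have hderiv : ∀ y : ℝ, 0 < y → HasDerivAt q
      ((Real.cosh y * (y * Real.cosh y) -
        Real.sinh y * (1 * Real.cosh y + y * Real.sinh y)) / (y * Real.cosh y) ^ 2) y := by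
    intro y hy
    have hne : y * Real.cosh y ≠ 0 := by positivity
    exact (Real.hasDerivAt_sinh y).div ((hasDerivAt_id y).mul (Real.hasDerivAt_cosh y)) hne
  have hanti : AntitoneOn q (Set.Icc s u) := by
    apply antitoneOn_of_deriv_nonpos (convex_Icc s u)
    · intro y hy
      have hy0 : 0 < y := lt_of_lt_of_le hs hy.1
      exact ((hderiv y hy0).continuousAt).continuousWithinAt
    · intro y hy
      rw [interior_Icc] at hy
      exact ((hderiv y (lt_of_lt_of_le hs hy.1.le)).differentiableAt).differentiableWithinAt
    · intro y hy
      rw [interior_Icc] at hy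
      have hy0 : 0 < y := lt_of_lt_of_le hs hy.1.le
      rw [(hderiv y hy0).deriv]
      apply div_nonpos_of_nonpos_of_nonneg _ (sq_nonneg _)
      have h1 : Real.cosh y ^ 2 - Real.sinh y ^ 2 = 1 := Real.cosh_sq_sub_sinh_sq y
      have h2 : y ≤ Real.sinh y := (Real.self_lt_sinh_iff.mpr hy0).le
      have h3 : 1 ≤ Real.cosh y := Real.one_le_cosh y
      have h4 : 0 < Real.sinh y := lt_of_lt_of_le hy0 h2
      nlinarith [mul_le_mul_of_nonneg_left h3 h4.le]
  exact hanti (Set.mem_Icc.mpr ⟨le_rfl, hsu⟩) (Set.mem_Icc.mpr ⟨hsu, le_rfl⟩) hsu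

/-- Tangent-line bound for the concave function `u ↦ log cosh √u` at `u = a²`. -/
lemma aux_tangent {a : ℝ} (ha : 0 < a) (y : ℝ) :
    Real.log (Real.cosh y) ≤ Real.log (Real.cosh a)
      + Real.sinh a / (Real.cosh a * (2 * a)) * (y ^ 2 - a ^ 2) := by
  set m : ℝ := Real.sinh a / (Real.cosh a * (2 * a)) with hm
  -- reduce to y ≥ 0
  have habs : Real.cosh y = Real.cosh |y| := (Real.cosh_abs y).symm
  rw [habs, ← sq_abs y]
  set z := |y| with hz
  have hz0 : 0 ≤ z := abs_nonneg y
  clear_value z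
  clear habs hz
  -- the function h
  set h : ℝ → ℝ := fun s => m * s ^ 2 - Real.log (Real.cosh s) with hhdef
  have hderiv : ∀ s : ℝ, HasDerivAt h (m * (2 * s) - (Real.cosh s)⁻¹ * Real.sinh s) s := by
    intro s
    have h1 : HasDerivAt (fun s : ℝ => m * s ^ 2) (m * (2 * s)) s := by
      simpa using ((hasDerivAt_pow 2 s).const_mul m)
    have h2 : HasDerivAt (fun s : ℝ => Real.log (Real.cosh s))
        ((Real.cosh s)⁻¹ * Real.sinh s) s :=
      (Real.hasDerivAt_log (Real.cosh_pos s).ne').comp s (Real.hasDerivAt_cosh s)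
    exact h1.sub h2
  have key : h a ≤ h z := by
    rcases le_total z a with hza | haz
    · -- antitone on [0, a]
      have hanti : AntitoneOn h (Set.Icc 0 a) := by
        apply antitoneOn_of_deriv_nonpos (convex_Icc 0 a)
        · exact fun s _ => ((hderiv s).continuousAt).continuousWithinAt
        · exact fun s _ => ((hderiv s).differentiableAt).differentiableWithinAt
        · intro s hs
          rw [interior_Icc] at hs
          rw [(hderiv s).deriv]
          have hs0 : 0 < s := hs.1
          have hkey := aux_sinh_div_anti hs0 hs.2.le
          have hc : 0 < Real.cosh s := Real.cosh_pos s
          have hca : 0 < Real.cosh a := Real.cosh_pos a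
          have : m * (2 * s) = s * (Real.sinh a / (a * Real.cosh a)) := by
            rw [hm]; field_simp
          rw [this]
          have h2 : s * (Real.sinh a / (a * Real.cosh a)) ≤
              s * (Real.sinh s / (s * Real.cosh s)) :=
            mul_le_mul_of_nonneg_left hkey hs0.le
          have h3 : s * (Real.sinh s / (s * Real.cosh s)) = (Real.cosh s)⁻¹ * Real.sinh s := by
            field_simp
          linarith [h2, h3.le]
      exact hanti (Set.mem_Icc.mpr ⟨hz0, hza⟩) (Set.mem_Icc.mpr ⟨ha.le, le_rfl⟩) hza
    · -- monotone on [a, ∞)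
      have hmono : MonotoneOn h (Set.Ici a) := by
        apply monotoneOn_of_deriv_nonneg (convex_Ici a)
        · exact fun s _ => ((hderiv s).continuousAt).continuousWithinAt
        · exact fun s _ => ((hderiv s).differentiableAt).differentiableWithinAt
        · intro s hs
          rw [interior_Ici] at hs
          rw [(hderiv s).deriv]
          have hs0 : 0 < s := lt_trans ha hs
          have hkey := aux_sinh_div_anti ha hs.le
          have hc : 0 < Real.cosh s := Real.cosh_pos s
          have hca : 0 < Real.cosh a := Real.cosh_pos a
          have h1 : m * (2 * s) = s * (Real.sinh a / (a * Real.cosh a)) := by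
            rw [hm]; field_simp
          have h2 : s * (Real.sinh s / (s * Real.cosh s)) ≤
              s * (Real.sinh a / (a * Real.cosh a)) :=
            mul_le_mul_of_nonneg_left hkey hs0.le
          have h3 : s * (Real.sinh s / (s * Real.cosh s)) = (Real.cosh s)⁻¹ * Real.sinh s := by
            field_simp
          linarith [h2, h3.ge]
      exact hmono (Set.mem_Icc.mpr ⟨le_rfl, haz⟩ |>.1 |> fun _ => Set.mem_Ici.mpr le_rfl)
        (Set.mem_Ici.mpr haz) haz
  simp only [hhdef] at key
  linarith

/-- `log (1+u) ≤ u - u²/2 + u³/3` for `u ≥ 0`. -/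
lemma aux_log_cubic {u : ℝ} (hu : 0 ≤ u) :
    Real.log (1 + u) ≤ u - u ^ 2 / 2 + u ^ 3 / 3 := by
  set f : ℝ → ℝ := fun u => u - u ^ 2 / 2 + u ^ 3 / 3 - Real.log (1 + u) with hf
  have hderiv : ∀ v : ℝ, 0 ≤ v → HasDerivAt f (1 - v + v ^ 2 - (1 + v)⁻¹) v := by
    intro v hv
    have h1 : HasDerivAt (fun v : ℝ => Real.log (1 + v)) ((1 + v)⁻¹ * 1) v :=
      (Real.hasDerivAt_log (by positivity)).comp v ((hasDerivAt_id v).const_add 1)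
    have h2 := (((hasDerivAt_id' (x := v)).sub ((hasDerivAt_pow 2 v).div_const 2)).add
        ((hasDerivAt_pow 3 v).div_const 3)).sub h1
    refine h2.congr_deriv ?_
    push_cast
    ring
  have hmono : MonotoneOn f (Set.Ici 0) := by
    apply monotoneOn_of_deriv_nonneg (convex_Ici 0)
    · exact fun v hv => ((hderiv v hv).continuousAt).continuousWithinAt
    · intro v hv
      rw [interior_Ici] at hv
      exact ((hderiv v hv.le).differentiableAt).differentiableWithinAt
    · intro v hv
      rw [interior_Ici] at hv
      rw [(hderiv v hv.le).deriv]
      have hv' : (0:ℝ) < v := hv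
      have h1 : (0:ℝ) < 1 + v := by linarith
      have hv0 : (0:ℝ) ≤ v := le_of_lt hv'
      have hinv : (1 + v) * (1 + v)⁻¹ = 1 := mul_inv_cancel₀ h1.ne'
      have hinvn : (0:ℝ) ≤ (1 + v)⁻¹ := inv_nonneg.mpr h1.le
      nlinarith [hinv, hinvn, hv0, sq_nonneg v]
  have h0 : f 0 = 0 := by simp [hf]
  have := hmono (Set.mem_Ici.mpr le_rfl) (Set.mem_Ici.mpr hu) hu
  rw [h0] at this
  simp only [hf] at this
  linarith

/-- `1 + a²/2 ≤ cosh a` for `a ≥ 0`. -/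
lemma aux_cosh_lower (a : ℝ) : 1 + a ^ 2 / 2 ≤ Real.cosh a := by
  wlog ha : 0 ≤ a with H
  · have := H (-a) (by linarith)
    simpa using this
  set g : ℝ → ℝ := fun s => Real.cosh s - 1 - s ^ 2 / 2 with hg
  have hderiv : ∀ s : ℝ, HasDerivAt g (Real.sinh s - s) s := by
    intro s
    have h2 := ((Real.hasDerivAt_cosh s).sub_const 1).sub ((hasDerivAt_pow 2 s).div_const 2)
    refine h2.congr_deriv ?_
    push_cast
    ring
  have hmono : MonotoneOn g (Set.Ici 0) := by
    apply monotoneOn_of_deriv_nonneg (convex_Ici 0)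
    · exact fun v hv => ((hderiv v).continuousAt).continuousWithinAt
    · exact fun v hv => ((hderiv v).differentiableAt).differentiableWithinAt
    · intro v hv
      rw [interior_Ici] at hv
      rw [(hderiv v).deriv]
      have := (Real.self_lt_sinh_iff.mpr hv).le
      linarith
  have h0 : g 0 = 0 := by simp [hg]
  have := hmono (Set.mem_Ici.mpr le_rfl) (Set.mem_Ici.mpr ha) ha
  rw [h0] at this
  simp only [hg] at this
  linarith

/-- Upper bound on `cosh` by its degree-6 Taylor polynomial plus error, for `|a| ≤ 1`. -/
lemma aux_cosh_upper {a : ℝ} (ha : |a| ≤ 1) :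
    Real.cosh a ≤ 1 + a ^ 2 / 2 + a ^ 4 / 24 + 7 * a ^ 6 / 4320 := by
  have h1 := Real.exp_bound ha (by norm_num : 0 < 6)
  have h2 := Real.exp_bound (x := -a) (by simpa using ha) (by norm_num : 0 < 6)
  rw [Finset.sum_range_succ, Finset.sum_range_succ, Finset.sum_range_succ,
    Finset.sum_range_succ, Finset.sum_range_succ, Finset.sum_range_succ] at h1 h2
  simp only [Finset.sum_range_zero] at h1 h2
  norm_num [Nat.factorial] at h1 h2
  have ha6 : |a| ^ 6 = a ^ 6 := by
    rw [← abs_pow, abs_of_nonneg (by positivity)]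
  rw [abs_le, ha6] at h1 h2
  rw [Real.cosh_eq]
  nlinarith [h1.1, h1.2, h2.1, h2.2]

/-- `log cosh a ≤ a²/2 - a⁴/15` for `0 ≤ a ≤ 1/2`. -/
lemma aux_logcosh {a : ℝ} (ha0 : 0 ≤ a) (ha : a ≤ 1/2) :
    Real.log (Real.cosh a) ≤ a ^ 2 / 2 - a ^ 4 / 15 := by
  set u := Real.cosh a - 1 with hu
  have hu0 : 0 ≤ u := by
    have := Real.one_le_cosh a; linarith [hu]
  have hlow : a ^ 2 / 2 ≤ u := by
    have := aux_cosh_lower a; linarith [hu]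
  have habs : |a| ≤ 1 := by rw [abs_of_nonneg ha0]; linarith
  have hup : u ≤ a ^ 2 / 2 + a ^ 4 / 24 + 7 * a ^ 6 / 4320 := by
    have := aux_cosh_upper habs; linarith [hu]
  have hlog : Real.log (Real.cosh a) ≤ u - u ^ 2 / 2 + u ^ 3 / 3 := by
    have h1 : Real.cosh a = 1 + u := by simp [hu]
    rw [h1]
    exact aux_log_cubic hu0
  -- u ≤ (13/25) a²  (using a ≤ 1/2)
  have ha2 : a ^ 2 ≤ 1 / 4 := by nlinarith
  have h4 : a ^ 4 ≤ a ^ 2 / 4 := by nlinarith [sq_nonneg a]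
  have h6 : a ^ 6 ≤ a ^ 2 / 16 := by
    nlinarith [mul_le_mul_of_nonneg_left ha2 (pow_nonneg ha0 4), h4]
  have hu13 : u ≤ 13 / 25 * a ^ 2 := by linarith
  have hu3 : u ^ 3 ≤ (13 / 25) ^ 3 * a ^ 6 := by
    calc u ^ 3 ≤ (13 / 25 * a ^ 2) ^ 3 := by
          apply pow_le_pow_left₀ hu0 hu13
      _ = (13 / 25) ^ 3 * a ^ 6 := by ring
  have ha6 : a ^ 6 ≤ a ^ 4 / 4 := by
    nlinarith [mul_le_mul_of_nonneg_left ha2 (pow_nonneg ha0 4)]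
  have hsq : a ^ 4 / 4 ≤ u ^ 2 := by nlinarith [hlow, sq_nonneg a]
  linarith [hlog, hup, hu3, ha6, hsq]

lemma aux_pdf_eq : ProbabilityTheory.gaussianPDFReal 0 1
    = fun x => (Real.sqrt (2 * Real.pi))⁻¹ * Real.exp (-(1/2) * x ^ 2) := by
  ext x
  rw [ProbabilityTheory.gaussianPDFReal]
  simp only [NNReal.coe_one, mul_one, sub_zero]
  congr 1
  ring

lemma aux_integral_gaussian (g : ℝ → ℝ) :
    ∫ x, g x ∂(ProbabilityTheory.gaussianReal 0 1)
      = ∫ x, ProbabilityTheory.gaussianPDFReal 0 1 x * g x := by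
  rw [ProbabilityTheory.gaussianReal_of_var_ne_zero 0 one_ne_zero,
    ProbabilityTheory.gaussianPDF_def]
  have hmeas : Measurable fun x => (ProbabilityTheory.gaussianPDFReal 0 1 x).toNNReal :=
    (ProbabilityTheory.measurable_gaussianPDFReal 0 1).real_toNNReal
  have heq : (fun x => ENNReal.ofReal (ProbabilityTheory.gaussianPDFReal 0 1 x))
      = fun x => ((ProbabilityTheory.gaussianPDFReal 0 1 x).toNNReal : ℝ≥0∞) := rfl
  rw [heq, integral_withDensity_eq_integral_smul hmeas]
  congr 1
  ext x
  rw [NNReal.smul_def, smul_eq_mul, Real.coe_toNNReal _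
    (ProbabilityTheory.gaussianPDFReal_nonneg 0 1 x)]

lemma aux_integrable_gaussian_iff (g : ℝ → ℝ) :
    Integrable g (ProbabilityTheory.gaussianReal 0 1)
      ↔ Integrable (fun x => ProbabilityTheory.gaussianPDFReal 0 1 x * g x) := by
  rw [ProbabilityTheory.gaussianReal_of_var_ne_zero 0 one_ne_zero,
    ProbabilityTheory.gaussianPDF_def]
  have hmeas : Measurable fun x => (ProbabilityTheory.gaussianPDFReal 0 1 x).toNNReal :=
    (ProbabilityTheory.measurable_gaussianPDFReal 0 1).real_toNNReal
  have heq : (fun x => ENNReal.ofReal (ProbabilityTheory.gaussianPDFReal 0 1 x))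
      = fun x => ((ProbabilityTheory.gaussianPDFReal 0 1 x).toNNReal : ℝ≥0∞) := rfl
  rw [heq, integrable_withDensity_iff_integrable_smul hmeas]
  constructor <;> intro h <;> [skip; skip] <;>
  · apply h.congr
    filter_upwards with x
    rw [NNReal.smul_def, smul_eq_mul, Real.coe_toNNReal _
      (ProbabilityTheory.gaussianPDFReal_nonneg 0 1 x)]

lemma aux_integrable_sq_exp : Integrable (fun x : ℝ => x ^ 2 * Real.exp (-(1/2) * x ^ 2)) := by
  have := integrable_rpow_mul_exp_neg_mul_sq (b := 1/2) (by norm_num) (s := 2) (by norm_num)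
  apply this.congr
  filter_upwards with x
  rw [← Real.rpow_natCast x 2]
  norm_num

lemma aux_integral_exp : ∫ x : ℝ, Real.exp (-(1/2) * x ^ 2) = Real.sqrt (2 * Real.pi) := by
  rw [show Real.sqrt (2 * Real.pi) = Real.sqrt (Real.pi / (1/2)) by ring_nf]
  exact integral_gaussian (1/2)

lemma aux_integral_sq_exp :
    ∫ x : ℝ, x ^ 2 * Real.exp (-(1/2) * x ^ 2) = Real.sqrt (2 * Real.pi) := by
  have hu : ∀ x : ℝ, HasDerivAt (fun x : ℝ => x) 1 x := fun x => hasDerivAt_id' (x := x)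
  have hv : ∀ x : ℝ, HasDerivAt (fun x : ℝ => -Real.exp (-(1/2) * x ^ 2))
      (x * Real.exp (-(1/2) * x ^ 2)) x := by
    intro x
    have h1 : HasDerivAt (fun x : ℝ => -(1/2) * x ^ 2) (-(1/2) * (2 * x)) x := by
      simpa using (hasDerivAt_pow 2 x).const_mul (-(1/2) : ℝ)
    have h2 := (h1.exp).neg
    refine h2.congr_deriv ?_
    ring
  have huv' : Integrable ((fun x : ℝ => x) * fun x => x * Real.exp (-(1/2) * x ^ 2)) := by
    apply aux_integrable_sq_exp.congr
    filter_upwards with x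
    simp [Pi.mul_apply]; ring
  have hu'v : Integrable ((fun _ : ℝ => (1:ℝ)) * fun x => -Real.exp (-(1/2) * x ^ 2)) := by
    apply (integrable_exp_neg_mul_sq (by norm_num : (0:ℝ) < 1/2)).neg.congr
    filter_upwards with x
    simp [Pi.mul_apply]
  have huv : Integrable ((fun x : ℝ => x) * fun x => -Real.exp (-(1/2) * x ^ 2)) := by
    apply (integrable_mul_exp_neg_mul_sq (by norm_num : (0:ℝ) < 1/2)).neg.congr
    filter_upwards with x
    simp only [Pi.mul_apply, Pi.neg_apply]
    ring
  have key := integral_mul_deriv_eq_deriv_mul_of_integrable (fun x _ => hu x) (fun x _ => hv x) huv' hu'v huv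
  have h1 : ∫ x : ℝ, x * (x * Real.exp (-(1/2) * x ^ 2))
      = ∫ x : ℝ, x ^ 2 * Real.exp (-(1/2) * x ^ 2) := by
    congr 1; ext x; ring
  have h2 : ∫ x : ℝ, (1:ℝ) * -Real.exp (-(1/2) * x ^ 2)
      = -∫ x : ℝ, Real.exp (-(1/2) * x ^ 2) := by
    rw [← integral_neg]; congr 1; ext x; ring
  rw [h1, h2] at key
  rw [key, neg_neg, aux_integral_exp]

lemma aux_second_moment :
    ∫ x, x ^ 2 ∂(ProbabilityTheory.gaussianReal 0 1) = 1 := by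
  rw [aux_integral_gaussian, aux_pdf_eq]
  have : (fun x : ℝ => (Real.sqrt (2 * Real.pi))⁻¹ * Real.exp (-(1/2) * x ^ 2) * x ^ 2)
      = fun x : ℝ => (Real.sqrt (2 * Real.pi))⁻¹ * (x ^ 2 * Real.exp (-(1/2) * x ^ 2)) := by
    ext x; ring
  rw [this, integral_const_mul, aux_integral_sq_exp]
  rw [inv_mul_cancel₀]
  positivity

lemma aux_integrable_sq :
    Integrable (fun x : ℝ => x ^ 2) (ProbabilityTheory.gaussianReal 0 1) := by
  rw [aux_integrable_gaussian_iff, aux_pdf_eq]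
  have : (fun x : ℝ => (Real.sqrt (2 * Real.pi))⁻¹ * Real.exp (-(1/2) * x ^ 2) * x ^ 2)
      = fun x : ℝ => (Real.sqrt (2 * Real.pi))⁻¹ * (x ^ 2 * Real.exp (-(1/2) * x ^ 2)) := by
    ext x; ring
  rw [this]
  exact aux_integrable_sq_exp.const_mul _

/-- For every `t > 0` and integer `p ≥ 3`, there exists `C₀ > 0` such that for all `C ≥ C₀`,
`E[log cosh(√(2/C) Z)] - 1/C + t * ((p-1)/p) * (1/(C²t))^(p/(p-1)) < 0`,
where `Z` is a standard Gaussian random variable. -/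
theorem stmt_4 (t : ℝ) (ht : 0 < t) (p : ℕ) (hp : 3 ≤ p) :
    ∃ C₀ > (0 : ℝ), ∀ C ≥ C₀,
      (∫ x, Real.log (Real.cosh (Real.sqrt (2 / C) * x)) ∂(gaussianReal 0 1))
        - 1 / C
        + t * (((p : ℝ) - 1) / p) * (1 / (C ^ 2 * t)) ^ ((p : ℝ) / ((p : ℝ) - 1)) < 0 := by
  have hpR : (3:ℝ) ≤ (p:ℝ) := by exact_mod_cast hp
  set n : ℝ := (p:ℝ) - 1 with hn_def
  have hn2 : (2:ℝ) ≤ n := by rw [hn_def]; linarith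
  have hn0 : (0:ℝ) < n := by linarith
  have hp0 : (0:ℝ) < (p:ℝ) := by linarith
  set B : ℝ := ((4:ℝ)/15) ^ (p - 1) with hB_def
  have hB0 : (0:ℝ) < B := by positivity
  refine ⟨max 8 (1/(t*B) + 1), lt_of_lt_of_le (by norm_num) (le_max_left _ _), ?_⟩
  intro C hC
  have hC8 : (8:ℝ) ≤ C := le_trans (le_max_left _ _) hC
  have hC0 : (0:ℝ) < C := by linarith
  have hCB : 1/(t*B) + 1 ≤ C := le_trans (le_max_right _ _) hC
  -- the Gaussian part
  set a : ℝ := Real.sqrt (2/C) with ha_def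
  have ha2 : a ^ 2 = 2/C := Real.sq_sqrt (by positivity)
  have ha0 : 0 < a := Real.sqrt_pos.mpr (by positivity)
  have hquarter : 2/C ≤ 1/4 := by
    rw [div_le_div_iff₀ hC0 (by norm_num)]; linarith
  have hahalf : a ≤ 1/2 := by nlinarith [ha2, ha0.le]
  set m : ℝ := Real.sinh a / (Real.cosh a * (2*a)) with hm_def
  have hpt : ∀ x : ℝ, Real.log (Real.cosh (a * x))
      ≤ Real.log (Real.cosh a) + m * (a^2 * x^2 - a^2) := by
    intro x
    have h := aux_tangent ha0 (a*x)
    rw [mul_pow] at h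
    exact h
  have hint_sq : Integrable (fun x : ℝ => x ^ 2) (gaussianReal 0 1) := aux_integrable_sq
  have hint_rhs : Integrable
      (fun x : ℝ => Real.log (Real.cosh a) + m * (a^2 * x^2 - a^2)) (gaussianReal 0 1) := by
    apply (integrable_const _).add
    exact (((hint_sq.const_mul (a^2)).sub (integrable_const _)).const_mul m)
  have hint_lhs : Integrable
      (fun x : ℝ => Real.log (Real.cosh (a * x))) (gaussianReal 0 1) := by
    apply Integrable.mono (hint_sq.const_mul (a^2/2))
    · exact ((Real.continuous_cosh.comp (continuous_const.mul continuous_id)).log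
        (fun x => (Real.cosh_pos _).ne')).aestronglyMeasurable
    · filter_upwards with x
      have h1 : 0 ≤ Real.log (Real.cosh (a*x)) :=
        Real.log_nonneg (Real.one_le_cosh _)
      have h2 : Real.log (Real.cosh (a*x)) ≤ (a*x)^2/2 := by
        rw [Real.log_le_iff_le_exp (Real.cosh_pos _)]
        exact Real.cosh_le_exp_half_sq _
      rw [Real.norm_eq_abs, Real.norm_eq_abs, abs_of_nonneg h1]
      have h3 : (a*x)^2/2 = a^2/2 * x^2 := by ring
      have h4 : 0 ≤ a^2/2 * x^2 := by positivity
      rw [abs_of_nonneg h4]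
      linarith [h2, h3.le]
  have hmono := integral_mono hint_lhs hint_rhs hpt
  have hrhs_eq : ∫ x, (Real.log (Real.cosh a) + m * (a^2 * x^2 - a^2)) ∂(gaussianReal 0 1)
      = Real.log (Real.cosh a) := by
    have h2 : (fun x : ℝ => Real.log (Real.cosh a) + m * (a^2 * x^2 - a^2))
        = fun x : ℝ => (Real.log (Real.cosh a) - m * a^2) + (m * a^2) * x^2 := by
      ext x; ring
    rw [h2, integral_add (integrable_const _) (hint_sq.const_mul _),
      integral_const_mul, aux_second_moment, integral_const, probReal_univ]
    simp
  rw [hrhs_eq] at hmono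
  have hlog : Real.log (Real.cosh a) ≤ a^2/2 - a^4/15 := aux_logcosh ha0.le hahalf
  have ha4 : a^4 = 4/C^2 := by
    have : a^4 = (a^2)^2 := by ring
    rw [this, ha2]; field_simp; ring
  have hgauss : (∫ x, Real.log (Real.cosh (a * x)) ∂(gaussianReal 0 1))
      ≤ 1/C - (4/15) * (1/C^2) := by
    have e1 : a^2/2 = 1/C := by rw [ha2]; ring
    have e2 : a^4/15 = (4/15) * (1/C^2) := by rw [ha4]; ring
    linarith [hmono, hlog]
  -- the polynomial part
  set X : ℝ := 1 / (C ^ 2 * t) with hX_def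
  have hX0 : 0 < X := by positivity
  have hq : (p:ℝ)/n = 1 + 1/n := by
    field_simp
    rw [hn_def]; ring
  have hXq : X ^ ((p:ℝ)/n) = X * X ^ (1/n) := by
    rw [hq, Real.rpow_add hX0, Real.rpow_one]
  -- X ≤ B
  have htB : 0 < t * B := by positivity
  have h1B : 1 ≤ C * (t * B) := by
    have h' : 1/(t*B) ≤ C := by linarith
    rwa [div_le_iff₀ htB] at h'
  have hXB : X ≤ B := by
    rw [hX_def, div_le_iff₀ (by positivity)]
    have hC2C : C ≤ C^2 := by nlinarith [mul_le_mul_of_nonneg_left hC8 hC0.le]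
    have h2 : C * (t * B) ≤ C^2 * (t * B) := mul_le_mul_of_nonneg_right hC2C htB.le
    linarith [h1B, h2]
  have hBr : B = ((4:ℝ)/15) ^ ((n:ℝ)) := by
    rw [hB_def, ← Real.rpow_natCast ((4:ℝ)/15) (p-1)]
    congr 1
    have : ((p - 1 : ℕ) : ℝ) = (p:ℝ) - 1 := by
      have hp1 : 1 ≤ p := by omega
      push_cast [Nat.cast_sub hp1]
      ring
    rw [this]
  have hY : X ^ (1/n) ≤ 4/15 := by
    calc X ^ (1/n) ≤ B ^ (1/n) := Real.rpow_le_rpow hX0.le hXB (by positivity)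
      _ = (((4:ℝ)/15) ^ (n:ℝ)) ^ (1/n) := by rw [hBr]
      _ = ((4:ℝ)/15) ^ ((n:ℝ) * (1/n)) := by
          rw [← Real.rpow_mul (by norm_num : (0:ℝ) ≤ 4/15)]
      _ = 4/15 := by
          rw [mul_one_div_cancel hn0.ne', Real.rpow_one]
  have hY0 : 0 < X ^ (1/n) := Real.rpow_pos_of_pos hX0 _
  have hnp : n / (p:ℝ) < 1 := by
    rw [div_lt_one hp0, hn_def]; linarith
  have hkey : t * (n / (p:ℝ)) * X ^ ((p:ℝ)/n) < (4/15) * (1/C^2) := by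
    have htX : t * X = 1/C^2 := by
      rw [hX_def]; field_simp
    have harr : t * (n / (p:ℝ)) * (X * X ^ (1/n))
        = (n / (p:ℝ) * X ^ (1/n)) * (t * X) := by ring
    rw [hXq, harr, htX]
    have hlt : n / (p:ℝ) * X ^ (1/n) < 4/15 := by
      calc n / (p:ℝ) * X ^ (1/n) < 1 * X ^ (1/n) :=
            mul_lt_mul_of_pos_right hnp hY0
        _ = X ^ (1/n) := one_mul _
        _ ≤ 4/15 := hY
    have hC2 : (0:ℝ) < 1/C^2 := by positivity
    calc (n / (p:ℝ) * X ^ (1/n)) * (1/C^2) < (4/15) * (1/C^2) :=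
          mul_lt_mul_of_pos_right hlt hC2
      _ = (4/15) * (1/C^2) := rfl
  have hfinal : (∫ x, Real.log (Real.cosh (a * x)) ∂(gaussianReal 0 1))
      - 1 / C + t * (n / (p:ℝ)) * X ^ ((p:ℝ)/n) < 0 := by
    linarith [hgauss, hkey]
  exact hfinal
end

section
/- Fix an integer p ≥ 3, a constant C > 0 and 0 < β < 1, and define ξ₀(r) = r²/2 + (C r)^p/p and F_RS(q,β) = E[log cosh(β·√(ξ₀'(q))·Z)] + (β²/2)·(ξ₀(1) − ξ₀(q) − (1−q)·ξ₀'(q)) for q ∈ [0,1], where Z is a standard Gaussian random variable. Then there exist ε ∈ (0,1) and c > 0 such that F_RS(q,β) ≥ F_RS(0,β) + c·q² for all q ∈ [0,ε]. -/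
open Real MeasureTheory ProbabilityTheory

open Filter Set
open scoped NNReal ENNReal
open Real MeasureTheory ProbabilityTheory Filter Set

lemma aux_nonneg_of_hasDerivAt {f f' : ℝ → ℝ} (hd : ∀ x, HasDerivAt f (f' x) x)
    (h0 : f 0 = 0) (hp : ∀ x, 0 ≤ x → 0 ≤ f' x) : ∀ t, 0 ≤ t → 0 ≤ f t := by
  intro t ht
  have hmono : MonotoneOn f (Set.Ici 0) := by
    refine monotoneOn_of_deriv_nonneg (convex_Ici 0) ?_ ?_ ?_
    · exact fun x _ => ((hd x).differentiableAt.continuousAt).continuousWithinAt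
    · exact fun x _ => (hd x).differentiableAt.differentiableWithinAt
    · intro x hx
      rw [interior_Ici] at hx
      rw [(hd x).deriv]
      exact hp x hx.le
  have h := hmono Set.self_mem_Ici (Set.mem_Ici.mpr ht) ht
  rw [h0] at h
  exact h

lemma aux_sinh_le {t : ℝ} (ht : 0 ≤ t) : Real.sinh t ≤ t * Real.cosh t := by
  have key := aux_nonneg_of_hasDerivAt (f := fun s => s * Real.cosh s - Real.sinh s)
    (f' := fun s => s * Real.sinh s) ?_ (by simp) ?_ t ht
  · simpa using key
  · intro x
    have h1 : HasDerivAt (fun s : ℝ => s * Real.cosh s - Real.sinh s)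
        (1 * Real.cosh x + x * Real.sinh x - Real.cosh x) x :=
      ((hasDerivAt_id x).mul (Real.hasDerivAt_cosh x)).sub (Real.hasDerivAt_sinh x)
    convert h1 using 1; ring
  · exact fun x hx => mul_nonneg hx (Real.sinh_nonneg_iff.mpr hx)

lemma aux_sinh_ge {t : ℝ} (ht : 0 ≤ t) : (t - t^3/3) * Real.cosh t ≤ Real.sinh t := by
  have key := aux_nonneg_of_hasDerivAt
    (f := fun s => Real.sinh s - (s - s^3/3) * Real.cosh s)
    (f' := fun s => s^2 * Real.cosh s - (s - s^3/3) * Real.sinh s) ?_ (by simp) ?_ t ht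
  · simpa using key
  · intro x
    have hpoly : HasDerivAt (fun s : ℝ => s - s^3/3) (1 - (3:ℕ) * x^2 / 3) x :=
      (hasDerivAt_id x).sub ((hasDerivAt_pow 3 x).div_const 3)
    have h1 : HasDerivAt (fun s : ℝ => Real.sinh s - (s - s^3/3) * Real.cosh s)
        (Real.cosh x - ((1 - (3:ℕ) * x^2 / 3) * Real.cosh x + (x - x^3/3) * Real.sinh x)) x :=
      (Real.hasDerivAt_sinh x).sub (hpoly.mul (Real.hasDerivAt_cosh x))
    convert h1 using 1; push_cast; ring
  · intro x hx
    have h1 : Real.sinh x ≤ x * Real.cosh x := aux_sinh_le hx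
    have h2 : 0 ≤ Real.sinh x := Real.sinh_nonneg_iff.mpr hx
    have h3 : 0 < Real.cosh x := Real.cosh_pos x
    show 0 ≤ x^2 * Real.cosh x - (x - x^3/3) * Real.sinh x
    have h4 : x * Real.sinh x ≤ x * (x * Real.cosh x) := mul_le_mul_of_nonneg_left h1 hx
    have h5 : 0 ≤ x^3/3 * Real.sinh x := by positivity
    nlinarith [h4, h5]

lemma aux_log_cosh (t : ℝ) : t^2/2 - t^4/12 ≤ Real.log (Real.cosh t) := by
  suffices h : ∀ s : ℝ, 0 ≤ s → s^2/2 - s^4/12 ≤ Real.log (Real.cosh s) by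
    rcases le_total 0 t with ht | ht
    · exact h t ht
    · have := h (-t) (by linarith)
      rw [← Real.cosh_neg]
      have e : (-t)^2/2 - (-t)^4/12 = t^2/2 - t^4/12 := by ring
      linarith [e ▸ this]
  intro s hs
  have key := aux_nonneg_of_hasDerivAt
    (f := fun u => Real.log (Real.cosh u) - (u^2/2 - u^4/12))
    (f' := fun u => Real.sinh u / Real.cosh u - (u - u^3/3)) ?_ (by simp) ?_ s hs
  · simpa using key
  · intro x
    have hlog : HasDerivAt (fun u : ℝ => Real.log (Real.cosh u)) (Real.sinh x / Real.cosh x) x :=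
      (Real.hasDerivAt_cosh x).log (Real.cosh_pos x).ne'
    have hpoly : HasDerivAt (fun u : ℝ => u^2/2 - u^4/12)
        ((2:ℕ) * x^1 / 2 - (4:ℕ) * x^3 / 12) x :=
      ((hasDerivAt_pow 2 x).div_const 2).sub ((hasDerivAt_pow 4 x).div_const 12)
    have := hlog.sub hpoly
    refine this.congr_deriv ?_; push_cast; ring
  · intro x hx
    have h2 := aux_sinh_ge hx
    have h3 : (0:ℝ) < Real.cosh x := Real.cosh_pos x
    rw [sub_nonneg, le_div_iff₀ h3]
    linarith
open scoped NNReal ENNReal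

noncomputable def pdf0 (x : ℝ) : ℝ := (Real.sqrt (2 * π))⁻¹ * Real.exp (-x^2/2)

lemma pdf0_nonneg (x : ℝ) : 0 ≤ pdf0 x := by unfold pdf0; positivity

lemma gauss_eq : gaussianReal 0 1 =
    MeasureTheory.volume.withDensity fun x => ENNReal.ofReal (pdf0 x) := by
  rw [gaussianReal_of_var_ne_zero 0 one_ne_zero]
  congr 1
  funext x
  simp only [gaussianPDF_def, gaussianPDFReal_def, pdf0]
  norm_num

lemma pdf0_meas : Measurable fun x : ℝ => (pdf0 x).toNNReal :=
  ((measurable_id.pow_const 2).neg.div_const 2).exp.const_mul _ |>.real_toNNReal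

lemma integral_gauss_eq (g : ℝ → ℝ) :
    ∫ x, g x ∂(gaussianReal 0 1) = ∫ x, pdf0 x * g x := by
  rw [gauss_eq]
  have h : (fun x : ℝ => ENNReal.ofReal (pdf0 x))
      = fun x : ℝ => ((pdf0 x).toNNReal : ℝ≥0∞) := rfl
  rw [h, integral_withDensity_eq_integral_smul pdf0_meas]
  congr 1
  funext x
  rw [NNReal.smul_def, Real.coe_toNNReal _ (pdf0_nonneg x)]
  rfl

lemma integrable_gauss_iff {g : ℝ → ℝ} :
    Integrable g (gaussianReal 0 1) ↔ Integrable (fun x => pdf0 x * g x) := by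
  rw [gauss_eq]
  have h : (fun x : ℝ => ENNReal.ofReal (pdf0 x))
      = fun x : ℝ => ((pdf0 x).toNNReal : ℝ≥0∞) := rfl
  rw [h, integrable_withDensity_iff_integrable_smul pdf0_meas]
  have heq : (fun x => (pdf0 x).toNNReal • g x) = fun x => pdf0 x * g x := by
    funext x
    rw [NNReal.smul_def, Real.coe_toNNReal _ (pdf0_nonneg x), smul_eq_mul]
  rw [heq]

lemma exp_rw : (fun x : ℝ => Real.exp (-x^2/2)) = fun x => Real.exp (-(1/2 : ℝ) * x^2) := by
  funext x; ring_nf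

lemma hIexp : Integrable (fun x : ℝ => Real.exp (-x^2/2)) := by
  rw [exp_rw]
  exact integrable_exp_neg_mul_sq (by norm_num)

lemma hI2 : Integrable (fun x : ℝ => x^2 * Real.exp (-x^2/2)) := by
  have base : Integrable (fun x : ℝ => 4 * Real.exp (-(1/4 : ℝ) * x^2)) :=
    (integrable_exp_neg_mul_sq (by norm_num)).const_mul 4
  refine base.mono' (Continuous.aestronglyMeasurable (by continuity)) ?_
  refine Filter.Eventually.of_forall fun x => ?_
  have h1 : x^2/4 + 1 ≤ Real.exp (x^2/4) := Real.add_one_le_exp _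
  have h2 : Real.exp (-(1/4:ℝ)*x^2) = Real.exp (x^2/4) * Real.exp (-x^2/2) := by
    rw [← Real.exp_add]; ring_nf
  have h3 : (0:ℝ) < Real.exp (-x^2/2) := Real.exp_pos _
  rw [Real.norm_eq_abs, abs_of_nonneg (by positivity)]
  nlinarith

lemma hI4 : Integrable (fun x : ℝ => x^4 * Real.exp (-x^2/2)) := by
  have base : Integrable (fun x : ℝ => 64 * Real.exp (-(1/4 : ℝ) * x^2)) :=
    (integrable_exp_neg_mul_sq (by norm_num)).const_mul 64
  refine base.mono' (Continuous.aestronglyMeasurable (by continuity)) ?_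
  refine Filter.Eventually.of_forall fun x => ?_
  have h1 : x^2/8 + 1 ≤ Real.exp (x^2/8) := Real.add_one_le_exp _
  have h2 : Real.exp (-(1/4:ℝ)*x^2) = Real.exp (x^2/8) * Real.exp (x^2/8) * Real.exp (-x^2/2) := by
    rw [← Real.exp_add, ← Real.exp_add]; congr 1; ring
  have h3 : (0:ℝ) < Real.exp (-x^2/2) := Real.exp_pos _
  have h4 : x^2/8 ≤ Real.exp (x^2/8) := by linarith
  have h5 : x^2/8 * (x^2/8) ≤ Real.exp (x^2/8) * Real.exp (x^2/8) :=
    mul_le_mul h4 h4 (by positivity) (le_of_lt (Real.exp_pos _))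
  rw [Real.norm_eq_abs, abs_of_nonneg (by positivity)]
  nlinarith

lemma tendsto_pow_exp (m : ℕ) :
    Tendsto (fun x : ℝ => x^m * Real.exp (-x^2/2)) atTop (nhds 0) := by
  have h := rpow_mul_exp_neg_mul_sq_isLittleO_exp_neg (b := 1/2) (by norm_num) (m : ℝ)
  have hhalf : Tendsto (fun x : ℝ => (1/2 : ℝ) * x) atTop atTop :=
    Filter.Tendsto.const_mul_atTop (by norm_num) tendsto_id
  have hlin : Tendsto (fun x : ℝ => -((1/2 : ℝ) * x)) atTop atBot :=
    tendsto_neg_atTop_atBot.comp hhalf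
  have hlin' : Tendsto (fun x : ℝ => -(1/2 : ℝ) * x) atTop atBot :=
    hlin.congr fun x => by ring
  have h2 : Tendsto (fun x : ℝ => Real.exp (-(1/2 : ℝ) * x)) atTop (nhds 0) :=
    Real.tendsto_exp_atBot.comp hlin'
  have h3 := h.isBigO.trans_tendsto h2
  refine h3.congr fun x => ?_
  rw [Real.rpow_natCast]
  ring_nf

lemma moment_step (n : ℕ)
    (h1 : IntegrableOn (fun x : ℝ => x^n * Real.exp (-x^2/2)) (Set.Ioi 0))
    (h2 : IntegrableOn (fun x : ℝ => x^(n+2) * Real.exp (-x^2/2)) (Set.Ioi 0)) :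
    ∫ x in Set.Ioi (0:ℝ), x^(n+2) * Real.exp (-x^2/2)
      = ((n : ℝ)+1) * ∫ x in Set.Ioi (0:ℝ), x^n * Real.exp (-x^2/2) := by
  set f : ℝ → ℝ := fun x => -(x^(n+1) * Real.exp (-x^2/2)) with hf
  set f' : ℝ → ℝ := fun x => x^(n+2) * Real.exp (-x^2/2)
    - ((n : ℝ)+1) * (x^n * Real.exp (-x^2/2)) with hf'
  have hderiv : ∀ x ∈ Set.Ici (0:ℝ), HasDerivAt f (f' x) x := by
    intro x _
    have hexp : HasDerivAt (fun x : ℝ => Real.exp (-x^2/2))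
        (Real.exp (-x^2/2) * -((2:ℕ) * x^1 / 2)) x := by
      simpa [neg_div] using (((hasDerivAt_pow 2 x).div_const 2).neg).exp
    have hprod : HasDerivAt (fun x : ℝ => x^(n+1) * Real.exp (-x^2/2))
        (((n+1 : ℕ) : ℝ) * x^n * Real.exp (-x^2/2)
          + x^(n+1) * (Real.exp (-x^2/2) * -((2:ℕ) * x^1 / 2))) x := by
      have := (hasDerivAt_pow (n+1) x).mul hexp
      exact this.congr_deriv (by simp)
    have := hprod.neg
    refine this.congr_deriv ?_
    rw [hf']
    push_cast
    ring
  have hf'int : IntegrableOn f' (Set.Ioi 0) := h2.sub (h1.const_mul _)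
  have htend : Tendsto f atTop (nhds 0) := by
    have := (tendsto_pow_exp (n+1)).neg
    simpa using this
  have key := integral_Ioi_of_hasDerivAt_of_tendsto' hderiv hf'int htend
  have hf0 : f 0 = 0 := by simp [hf]
  rw [hf0] at key
  have hsplit : ∫ x in Set.Ioi (0:ℝ), f' x
      = (∫ x in Set.Ioi (0:ℝ), x^(n+2) * Real.exp (-x^2/2))
        - ((n:ℝ)+1) * ∫ x in Set.Ioi (0:ℝ), x^n * Real.exp (-x^2/2) := by
    rw [hf']
    rw [integral_sub h2 (h1.const_mul _), integral_const_mul]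
  rw [hsplit] at key
  linarith [key]

lemma even_reduce (n : ℕ) :
    ∫ x : ℝ, x^(2*n) * Real.exp (-x^2/2)
      = 2 * ∫ x in Set.Ioi (0:ℝ), x^(2*n) * Real.exp (-x^2/2) := by
  have h := integral_comp_abs (f := fun x : ℝ => x^(2*n) * Real.exp (-x^2/2))
  rw [← h]
  congr 1
  funext x
  rw [pow_mul, pow_mul, sq_abs]

lemma M0 : ∫ x : ℝ, Real.exp (-x^2/2) = Real.sqrt (2*π) := by
  rw [exp_rw]
  rw [integral_gaussian]
  congr 1
  rw [div_div_eq_mul_div, div_one]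
  ring

lemma J0 : ∫ x in Set.Ioi (0:ℝ), Real.exp (-x^2/2) = Real.sqrt (2*π) / 2 := by
  have h := even_reduce 0
  simp only [mul_zero, pow_zero, one_mul] at h
  rw [M0] at h
  linarith

lemma M2 : ∫ x : ℝ, x^2 * Real.exp (-x^2/2) = Real.sqrt (2*π) := by
  have h := even_reduce 1
  norm_num at h
  have hstep := moment_step 0 (by simpa using hIexp.integrableOn) (by simpa using hI2.integrableOn)
  norm_num at hstep
  rw [h, hstep, J0]
  ring

lemma M4 : ∫ x : ℝ, x^4 * Real.exp (-x^2/2) = 3 * Real.sqrt (2*π) := by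
  have h := even_reduce 2
  norm_num at h
  have hstep := moment_step 2 (by simpa using hI2.integrableOn) (by simpa using hI4.integrableOn)
  norm_num at hstep
  have hstep0 := moment_step 0 (by simpa using hIexp.integrableOn) (by simpa using hI2.integrableOn)
  norm_num at hstep0
  rw [h, hstep, hstep0, J0]
  ring

lemma key_integral (a : ℝ) :
    a^2/2 - a^4/4 ≤ ∫ x, Real.log (Real.cosh (a * x)) ∂(gaussianReal 0 1) := by
  set γ := gaussianReal 0 1
  have sqrt2π_pos : (0:ℝ) < Real.sqrt (2*π) := Real.sqrt_pos.mpr (by positivity)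
  -- the lower-bound function
  set L : ℝ → ℝ := fun x => a^2 * x^2 / 2 - a^4 * x^4 / 12 with hL
  have hLint_vol : Integrable (fun x => pdf0 x * L x) := by
    have : (fun x => pdf0 x * L x)
        = fun x => (Real.sqrt (2*π))⁻¹ * (a^2/2) * (x^2 * Real.exp (-x^2/2))
          - (Real.sqrt (2*π))⁻¹ * (a^4/12) * (x^4 * Real.exp (-x^2/2)) := by
      funext x; rw [hL, pdf0]; ring
    rw [this]
    exact (hI2.const_mul _).sub (hI4.const_mul _)
  have hLint : Integrable L γ := integrable_gauss_iff.mpr hLint_vol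
  have hUint : Integrable (fun x => Real.log (Real.cosh (a * x))) γ := by
    refine integrable_gauss_iff.mpr ?_
    have base : Integrable (fun x : ℝ => (Real.sqrt (2*π))⁻¹ * (a^2/2) * (x^2 * Real.exp (-x^2/2))) :=
      hI2.const_mul _
    refine base.mono' (Continuous.aestronglyMeasurable ?_) ?_
    · have h1 : Continuous pdf0 := by unfold pdf0; continuity
      have h2 : Continuous fun x : ℝ => Real.log (Real.cosh (a * x)) :=
        Continuous.log (Real.continuous_cosh.comp (continuous_const.mul continuous_id))
          fun x => (Real.cosh_pos _).ne'
      exact h1.mul h2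
    · refine Filter.Eventually.of_forall fun x => ?_
      have hnn : 0 ≤ Real.log (Real.cosh (a*x)) :=
        Real.log_nonneg (Real.one_le_cosh _)
      have hub : Real.log (Real.cosh (a*x)) ≤ (a*x)^2/2 := by
        have := Real.cosh_le_exp_half_sq (a*x)
        calc Real.log (Real.cosh (a*x)) ≤ Real.log (Real.exp ((a*x)^2/2)) :=
              Real.log_le_log (Real.cosh_pos _) this
          _ = (a*x)^2/2 := Real.log_exp _
      rw [Real.norm_eq_abs, abs_of_nonneg (mul_nonneg (pdf0_nonneg x) hnn)]
      have hp := pdf0_nonneg x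
      have : pdf0 x * Real.log (Real.cosh (a*x)) ≤ pdf0 x * ((a*x)^2/2) :=
        mul_le_mul_of_nonneg_left hub hp
      calc pdf0 x * Real.log (Real.cosh (a*x)) ≤ pdf0 x * ((a*x)^2/2) := this
        _ = (Real.sqrt (2*π))⁻¹ * (a^2/2) * (x^2 * Real.exp (-x^2/2)) := by
            rw [pdf0]; ring
  have hmono : ∫ x, L x ∂γ ≤ ∫ x, Real.log (Real.cosh (a * x)) ∂γ := by
    refine integral_mono hLint hUint fun x => ?_
    have := aux_log_cosh (a*x)
    rw [hL]
    calc a^2 * x^2/2 - a^4 * x^4/12 = (a*x)^2/2 - (a*x)^4/12 := by ring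
      _ ≤ Real.log (Real.cosh (a*x)) := this
  have hLval : ∫ x, L x ∂γ = a^2/2 - a^4/4 := by
    rw [integral_gauss_eq]
    have : (fun x => pdf0 x * L x)
        = fun x => (Real.sqrt (2*π))⁻¹ * (a^2/2) * (x^2 * Real.exp (-x^2/2))
          - (Real.sqrt (2*π))⁻¹ * (a^4/12) * (x^4 * Real.exp (-x^2/2)) := by
      funext x; rw [hL, pdf0]; ring
    rw [this, integral_sub ((hI2.const_mul _)) ((hI4.const_mul _)),
      integral_const_mul, integral_const_mul, M2, M4]
    field_simp
    ring
  linarith [hmono, hLval]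

lemma final_ineq (β δ q R c P I X : ℝ) (hβ : 0 < β) (hβ1 : β < 1)
    (hP : 3 ≤ P) (hq0 : 0 ≤ q) (hRnn : 0 ≤ R) (hRle : R ≤ δ * q) (hδ : 0 ≤ δ)
    (hβδ : β * (1 + δ) = (1 + β) / 2)
    (hc : c = β ^ 2 / 4 * (1 - ((1 + β) / 2) ^ 2))
    (hkey : β ^ 2 * (q + R) / 2 - β ^ 4 * (q + R) ^ 2 / 4 ≤ I) :
    β ^ 2 / 2 * X + c * q ^ 2
      ≤ I + β ^ 2 / 2 * (X - (q ^ 2 / 2 + R * q / P) - (1 - q) * (q + R)) := by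
  have hRqnn : 0 ≤ R * q := mul_nonneg hRnn hq0
  have hP0 : (0:ℝ) < P := by linarith
  have hRq : R * q / P ≤ R * q / 3 :=
    div_le_div_of_nonneg_left hRqnn (by norm_num) hP
  have hRq3 : R * q / 3 ≤ R * q := by linarith [div_le_self hRqnn (by norm_num : (1:ℝ) ≤ 3)]
  have hDnn : (0:ℝ) ≤ q + R := by linarith
  have hdiff : 0 ≤ δ * q - R := by linarith
  have hsum : 0 ≤ (1 + δ) * q + (q + R) := by nlinarith [mul_nonneg hδ hq0]
  have hsq : (q + R) ^ 2 ≤ ((1 + δ) * q) ^ 2 := by nlinarith [mul_nonneg hdiff hsum]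
  have h6 : β ^ 4 * (q + R) ^ 2 / 4 ≤ β ^ 2 * ((1 + β) / 2) ^ 2 * q ^ 2 / 4 := by
    have h7 : β ^ 4 * (q + R) ^ 2 ≤ β ^ 4 * ((1 + δ) * q) ^ 2 :=
      mul_le_mul_of_nonneg_left hsq (by positivity)
    have h8 : β ^ 4 * ((1 + δ) * q) ^ 2 = β ^ 2 * (β * (1 + δ)) ^ 2 * q ^ 2 := by ring
    rw [h8, hβδ] at h7
    linarith
  have hterm : 0 ≤ β ^ 2 / 2 * (R * q - R * q / P) := by
    have h9 : 0 ≤ R * q - R * q / P := by linarith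
    positivity
  nlinarith [hkey, h6, hterm]

/-- For `p ≥ 3`, `C > 0`, `0 < β < 1`, `ξ₀ r = r²/2 + (C r)^p/p` and the RS functional
`F_RS(q,β) = E[log cosh(β √(ξ₀'(q)) Z)] + (β²/2)(ξ₀(1) - ξ₀(q) - (1-q) ξ₀'(q))`,
there exist `ε ∈ (0,1)` and `c > 0` with `F_RS(q,β) ≥ F_RS(0,β) + c q²` for all `q ∈ [0,ε]`. -/
theorem stmt_8 (p : ℕ) (hp : 3 ≤ p) (C β : ℝ) (hC : 0 < C) (hβ : 0 < β) (hβ1 : β < 1) :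
    let ξ₀ : ℝ → ℝ := fun r => r ^ 2 / 2 + (C * r) ^ p / p
    let F : ℝ → ℝ := fun q =>
      (∫ x, Real.log (Real.cosh (β * Real.sqrt (deriv ξ₀ q) * x)) ∂(gaussianReal 0 1))
        + β ^ 2 / 2 * (ξ₀ 1 - ξ₀ q - (1 - q) * deriv ξ₀ q)
    ∃ ε ∈ Set.Ioo (0 : ℝ) 1, ∃ c > (0 : ℝ),
      ∀ q ∈ Set.Icc (0 : ℝ) ε, F 0 + c * q ^ 2 ≤ F q := by
  intro ξ₀ F
  have hp0 : (p : ℝ) ≠ 0 := Nat.cast_ne_zero.mpr (by omega)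
  have hp3 : (3 : ℝ) ≤ (p : ℝ) := by exact_mod_cast hp
  -- derivative of ξ₀
  have hD : ∀ q : ℝ, HasDerivAt ξ₀ (q + C * (C * q) ^ (p - 1)) q := by
    intro q
    have h1 := (hasDerivAt_pow 2 q).div_const 2
    have h2 := (((hasDerivAt_id q).const_mul C).pow p).div_const (p : ℝ)
    have h3 := h1.add h2
    simp only [id] at h3
    refine h3.congr_deriv ?_
    push_cast
    field_simp
  have hderiv : ∀ q : ℝ, deriv ξ₀ q = q + C * (C * q) ^ (p - 1) := fun q => (hD q).deriv
  -- constants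
  obtain ⟨δ, hδdef⟩ : ∃ d : ℝ, d = (1 - β) / (2 * β) := ⟨_, rfl⟩
  have hδ : 0 < δ := by
    rw [hδdef]; apply div_pos <;> linarith
  have hβδ : β * (1 + δ) = (1 + β) / 2 := by
    rw [hδdef]; field_simp; ring
  obtain ⟨ε, hεdef⟩ : ∃ e : ℝ, e = min (1/2) (δ / C ^ p) := ⟨_, rfl⟩
  have hCp : (0:ℝ) < C ^ p := pow_pos hC p
  have hε0 : 0 < ε := by rw [hεdef]; exact lt_min (by norm_num) (div_pos hδ hCp)
  have hε1 : ε < 1 := by rw [hεdef]; exact lt_of_le_of_lt (min_le_left _ _) (by norm_num)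
  have hεle : ε ≤ δ / C ^ p := by rw [hεdef]; exact min_le_right _ _
  obtain ⟨c, hcdef⟩ : ∃ c0 : ℝ, c0 = β ^ 2 / 4 * (1 - ((1 + β) / 2) ^ 2) := ⟨_, rfl⟩
  have hc : 0 < c := by
    have h1 : ((1 + β) / 2) ^ 2 < 1 := by nlinarith
    have h2 : (0:ℝ) < β ^ 2 / 4 := by positivity
    rw [hcdef]; nlinarith
  refine ⟨ε, ⟨hε0, hε1⟩, c, hc, ?_⟩
  intro q hq
  obtain ⟨hq0, hqε⟩ := hq
  -- derivative value at q
  obtain ⟨R, hRdef⟩ : ∃ r : ℝ, r = C * (C * q) ^ (p - 1) := ⟨_, rfl⟩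
  have hCCp : C * C ^ (p-1) = C ^ p := by
    rw [← pow_succ']; congr 1; omega
  have hReq : R = C ^ p * q ^ (p - 1) := by
    rw [hRdef, mul_pow, ← mul_assoc, hCCp]
  have hRnn : 0 ≤ R := by
    rw [hReq]; positivity
  have hqp1 : q ^ (p - 1) = q ^ (p - 2) * q := by
    rw [← pow_succ]; congr 1; omega
  have hqp2 : q ^ (p - 2) ≤ ε := by
    calc q ^ (p - 2) ≤ ε ^ (p - 2) := pow_le_pow_left₀ hq0 hqε _
      _ ≤ ε ^ 1 := pow_le_pow_of_le_one hε0.le (by linarith) (by omega)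
      _ = ε := pow_one ε
  have hRle : R ≤ δ * q := by
    calc R = C ^ p * q ^ (p - 2) * q := by rw [hReq, hqp1, mul_assoc]
      _ ≤ C ^ p * ε * q := by gcongr
      _ ≤ C ^ p * (δ / C ^ p) * q := by gcongr
      _ = δ * q := by field_simp
  -- value of F at 0
  have hξ0 : ξ₀ 0 = 0 := by
    show (0:ℝ) ^ 2 / 2 + (C * 0) ^ p / p = 0
    rw [mul_zero, zero_pow (by omega : p ≠ 0)]
    norm_num
  have hd0 : deriv ξ₀ 0 = 0 := by
    rw [hderiv 0, mul_zero, zero_pow (by omega : p - 1 ≠ 0)]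
    ring
  have hF0 : F 0 = β ^ 2 / 2 * ξ₀ 1 := by
    show (∫ x, Real.log (Real.cosh (β * Real.sqrt (deriv ξ₀ 0) * x)) ∂(gaussianReal 0 1))
        + β ^ 2 / 2 * (ξ₀ 1 - ξ₀ 0 - (1 - 0) * deriv ξ₀ 0) = β ^ 2 / 2 * ξ₀ 1
    rw [hd0, hξ0, Real.sqrt_zero]
    simp
  -- the integral lower bound
  have hDq : deriv ξ₀ q = q + R := by rw [hRdef]; exact hderiv q
  have hDnn : (0:ℝ) ≤ q + R := by linarith
  have hkey := key_integral (β * Real.sqrt (deriv ξ₀ q))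
  have ha2 : (β * Real.sqrt (deriv ξ₀ q)) ^ 2 = β ^ 2 * (q + R) := by
    rw [mul_pow, hDq, Real.sq_sqrt hDnn]
  have ha4 : (β * Real.sqrt (deriv ξ₀ q)) ^ 4 = β ^ 4 * (q + R) ^ 2 := by
    have h : (β * Real.sqrt (deriv ξ₀ q)) ^ 4 = ((β * Real.sqrt (deriv ξ₀ q)) ^ 2) ^ 2 := by ring
    rw [h, ha2]; ring
  rw [ha2, ha4] at hkey
  -- value of ξ₀ at q
  have hexp1 : p - 1 + 1 = p := by omega
  have hCq : (C * q) ^ p = R * q := by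
    rw [mul_pow, hReq, mul_assoc, ← pow_succ, hexp1]
  have hξq : ξ₀ q = q ^ 2 / 2 + R * q / p := by
    show q ^ 2 / 2 + (C * q) ^ p / p = q ^ 2 / 2 + R * q / p
    rw [hCq]
  have hFq : F q = (∫ x, Real.log (Real.cosh (β * Real.sqrt (deriv ξ₀ q) * x)) ∂(gaussianReal 0 1))
      + β ^ 2 / 2 * (ξ₀ 1 - ξ₀ q - (1 - q) * deriv ξ₀ q) := rfl
  rw [hDq] at hkey
  rw [hFq, hF0, hDq, hξq]
  exact final_ineq β δ q R c (p:ℝ) _ (ξ₀ 1) hβ hβ1 hp3 hq0 hRnn hRle hδ.le hβδ hcdef hkey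
end

section
/- Fix an integer p ≥ 3, a constant C > 0, β > 0 and h ∈ ℝ, and define ξ₀(r) = r²/2 + (C r)^p/p and F_RS(q,β,h) = E[log cosh(β·√(ξ₀'(q))·Z + h)] + (β²/2)·(ξ₀(1) − ξ₀(q) − (1−q)·ξ₀'(q)) for q ∈ [0,1], where Z is a standard Gaussian random variable. Then q ↦ F_RS(q,β,h) is differentiable on (0,1), and for every q ∈ (0,1) its derivative equals (β²·ξ₀''(q)/2)·( q − E[tanh²(β·√(ξ₀'(q))·Z + h)] ). -/
open Real MeasureTheory ProbabilityTheory Set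
open scoped NNReal ENNReal

namespace Stmt9Aux

noncomputable def gpdf : ℝ → ℝ := gaussianPDFReal 0 1

lemma gpdf_def (x : ℝ) : gpdf x = (Real.sqrt (2 * π))⁻¹ * Real.exp (-x ^ 2 / 2) := by
  simp [gpdf, gaussianPDFReal]

lemma gpdf_nonneg (x : ℝ) : 0 ≤ gpdf x := gaussianPDFReal_nonneg 0 1 x

lemma gpdf_cont : Continuous gpdf := by
  have : gpdf = fun x => (Real.sqrt (2 * π))⁻¹ * Real.exp (-x ^ 2 / 2) := funext gpdf_def
  rw [this]; continuity

lemma gpdf_hasDeriv (x : ℝ) : HasDerivAt gpdf (-x * gpdf x) x := by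
  have h1 : HasDerivAt (fun x : ℝ => -x ^ 2 / 2) (-x) x := by
    have := ((hasDerivAt_pow 2 x).neg).div_const 2
    exact this.congr_deriv (by push_cast; ring)
  have h2 := (Real.hasDerivAt_exp (-x ^ 2 / 2)).comp x h1
  have h3 := h2.const_mul ((Real.sqrt (2 * π))⁻¹)
  have he : gpdf = fun x => (Real.sqrt (2 * π))⁻¹ * Real.exp (-x ^ 2 / 2) := funext gpdf_def
  rw [he]
  exact h3.congr_deriv (by beta_reduce; ring)

lemma integral_gauss (f : ℝ → ℝ) :
    ∫ x, f x ∂(gaussianReal 0 1) = ∫ x, gpdf x * f x := by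
  rw [gaussianReal_of_var_ne_zero 0 one_ne_zero, gaussianPDF_def]
  rw [show (fun x => ENNReal.ofReal (gaussianPDFReal 0 1 x))
      = (fun x => ((Real.toNNReal (gaussianPDFReal 0 1 x) : ℝ≥0) : ℝ≥0∞)) from rfl]
  rw [integral_withDensity_eq_integral_smul ((measurable_gaussianPDFReal 0 1).real_toNNReal) f]
  refine integral_congr_ae (Filter.Eventually.of_forall fun x => ?_)
  simp only [NNReal.smul_def, Real.coe_toNNReal _ (gpdf_nonneg x), smul_eq_mul, gpdf,
    Real.coe_toNNReal _ (gaussianPDFReal_nonneg 0 1 x)]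

lemma int_gpdf : Integrable gpdf := integrable_gaussianPDFReal 0 1

lemma int_abs_gpdf : Integrable (fun x => |x| * gpdf x) := by
  have h : Integrable (fun x : ℝ => x * Real.exp (-(1/2) * x ^ 2)) :=
    integrable_mul_exp_neg_mul_sq (by norm_num)
  have h2 := (h.abs.const_mul ((Real.sqrt (2 * π))⁻¹))
  refine h2.congr (Filter.Eventually.of_forall fun x => ?_)
  simp only [gpdf_def, abs_mul, abs_of_nonneg (Real.exp_pos _).le]
  ring_nf

lemma integrable_dom {g : ℝ → ℝ} (hg : AEStronglyMeasurable g volume) (A B : ℝ)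
    (hbound : ∀ x, |g x| ≤ A + B * |x|) : Integrable (fun x => gpdf x * g x) := by
  have h1 : Integrable (fun x => A * gpdf x + B * (|x| * gpdf x)) :=
    (int_gpdf.const_mul A).add (int_abs_gpdf.const_mul B)
  refine h1.mono' (gpdf_cont.aestronglyMeasurable.mul hg)
    (Filter.Eventually.of_forall fun x => ?_)
  rw [Real.norm_eq_abs, abs_mul, abs_of_nonneg (gpdf_nonneg x)]
  calc gpdf x * |g x| ≤ gpdf x * (A + B * |x|) :=
        mul_le_mul_of_nonneg_left (hbound x) (gpdf_nonneg x)
    _ = A * gpdf x + B * (|x| * gpdf x) := by ring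

lemma abs_tanh_le_one (y : ℝ) : |Real.tanh y| ≤ 1 := by
  rw [Real.tanh_eq_sinh_div_cosh, abs_div, abs_of_pos (Real.cosh_pos y),
    div_le_one (Real.cosh_pos y), Real.abs_sinh, ← Real.cosh_abs y,
    Real.sinh_eq, Real.cosh_eq]
  nlinarith [Real.exp_pos (-|y|)]

lemma hasDerivAt_tanh (y : ℝ) : HasDerivAt Real.tanh (1 - Real.tanh y ^ 2) y := by
  have h := (Real.hasDerivAt_sinh y).div (Real.hasDerivAt_cosh y) (Real.cosh_pos y).ne'
  have he : ∀ z, Real.tanh z = Real.sinh z / Real.cosh z := Real.tanh_eq_sinh_div_cosh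
  rw [show Real.tanh = fun z => Real.sinh z / Real.cosh z from funext he]
  refine h.congr_deriv ?_
  have hc := (Real.cosh_pos y).ne'
  field_simp

lemma logcosh_hasDerivAt (y : ℝ) :
    HasDerivAt (fun z => Real.log (Real.cosh z)) (Real.tanh y) y := by
  have h := (Real.hasDerivAt_cosh y).log (Real.cosh_pos y).ne'
  simpa [Real.tanh_eq_sinh_div_cosh] using h

lemma logcosh_nonneg (y : ℝ) : 0 ≤ Real.log (Real.cosh y) :=
  Real.log_nonneg (Real.one_le_cosh y)

lemma logcosh_le_abs (y : ℝ) : Real.log (Real.cosh y) ≤ |y| := by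
  have h : Real.cosh y ≤ Real.exp |y| := by
    rw [Real.cosh_eq]
    have h1 : Real.exp y ≤ Real.exp |y| := Real.exp_le_exp.2 (le_abs_self y)
    have h2 : Real.exp (-y) ≤ Real.exp |y| := Real.exp_le_exp.2 (neg_le_abs y)
    linarith
  calc Real.log (Real.cosh y) ≤ Real.log (Real.exp |y|) :=
        Real.log_le_log (Real.cosh_pos y) h
    _ = |y| := Real.log_exp _

lemma tanh_sq_le_one (y : ℝ) : Real.tanh y ^ 2 ≤ 1 := by
  have := abs_tanh_le_one y
  nlinarith [abs_nonneg (Real.tanh y), sq_abs (Real.tanh y)]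

lemma cont_tanh : Continuous Real.tanh := by
  have h : Real.tanh = fun y => Real.sinh y / Real.cosh y := funext Real.tanh_eq_sinh_div_cosh
  rw [h]
  exact Real.continuous_sinh.div Real.continuous_cosh fun x => (Real.cosh_pos x).ne'

lemma cont_logcosh : Continuous fun y => Real.log (Real.cosh y) := by
  rw [continuous_iff_continuousAt]
  intro y
  exact (Real.continuousAt_log (Real.cosh_pos y).ne').comp Real.continuous_cosh.continuousAt

/-- bounded continuous times gpdf is integrable -/
lemma integrable_bdd {g : ℝ → ℝ} (hg : Continuous g) (M : ℝ) (hb : ∀ x, |g x| ≤ M) :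
    Integrable (fun x => g x * gpdf x) := by
  refine (int_gpdf.const_mul M).mono' (hg.aestronglyMeasurable.mul gpdf_cont.aestronglyMeasurable)
    (Filter.Eventually.of_forall fun x => ?_)
  rw [Real.norm_eq_abs, abs_mul, abs_of_nonneg (gpdf_nonneg x)]
  exact mul_le_mul_of_nonneg_right (hb x) (gpdf_nonneg x)

lemma integrable_abs_mul {g : ℝ → ℝ} (hg : Continuous g) (M : ℝ) (hb : ∀ x, |g x| ≤ M) :
    Integrable (fun x => g x * (x * gpdf x)) := by
  refine (int_abs_gpdf.const_mul M).mono'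
    ((hg.mul (continuous_id.mul gpdf_cont)).aestronglyMeasurable)
    (Filter.Eventually.of_forall fun x => ?_)
  rw [Real.norm_eq_abs, abs_mul, abs_mul, abs_of_nonneg (gpdf_nonneg x)]
  calc |g x| * (|x| * gpdf x) ≤ M * (|x| * gpdf x) :=
        mul_le_mul_of_nonneg_right (hb x) (mul_nonneg (abs_nonneg x) (gpdf_nonneg x))
    _ = M * (|x| * gpdf x) := rfl

/-- Gaussian integration by parts for tanh. -/
lemma ibp (a h : ℝ) :
    ∫ x, gpdf x * (x * Real.tanh (a * x + h))
      = a * ∫ x, gpdf x * (1 - Real.tanh (a * x + h) ^ 2) := by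
  set u : ℝ → ℝ := fun x => Real.tanh (a * x + h) with hu_def
  set u' : ℝ → ℝ := fun x => (1 - Real.tanh (a * x + h) ^ 2) * a with hu'_def
  set v' : ℝ → ℝ := fun x => -x * gpdf x with hv'_def
  have hu : ∀ x, HasDerivAt u (u' x) x := by
    intro x
    have hl : HasDerivAt (fun x : ℝ => a * x + h) a x := by
      simpa using ((hasDerivAt_id x).const_mul a).add_const h
    refine ((hasDerivAt_tanh (a * x + h)).comp x hl).congr_deriv ?_
    simp only [hu'_def]
  have hcont_u : Continuous u := cont_tanh.comp (by continuity)
  have hcont_u' : Continuous u' := by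
    apply Continuous.mul _ continuous_const
    exact (continuous_const.sub ((cont_tanh.comp (by continuity)).pow 2))
  have hi1 : Integrable (u * v') := by
    have : Integrable (fun x => (- u x) * (x * gpdf x)) :=
      integrable_abs_mul (by continuity) 1 (fun x => by simpa using abs_tanh_le_one (a*x+h))
    refine this.congr (Filter.Eventually.of_forall fun x => ?_)
    simp only [Pi.mul_apply, hv'_def]; ring
  have hi2 : Integrable (u' * gpdf) := by
    have : Integrable (fun x => u' x * gpdf x) := by
      refine integrable_bdd hcont_u' (1 * |a|) fun x => ?_
      rw [hu'_def, abs_mul]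
      refine mul_le_mul_of_nonneg_right ?_ (abs_nonneg a)
      rw [abs_le]
      constructor <;> nlinarith [tanh_sq_le_one (a*x+h), sq_nonneg (Real.tanh (a*x+h))]
    exact this
  have hi3 : Integrable (u * gpdf) := by
    have : Integrable (fun x => u x * gpdf x) :=
      integrable_bdd hcont_u 1 (fun x => abs_tanh_le_one (a*x+h))
    exact this
  have key := integral_mul_deriv_eq_deriv_mul_of_integrable (fun x _ => hu x) (fun x _ => gpdf_hasDeriv x) hi1 hi2 hi3
  have lhs_eq : ∫ x, u x * v' x = - ∫ x, gpdf x * (x * Real.tanh (a * x + h)) := by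
    rw [← integral_neg]
    refine integral_congr_ae (Filter.Eventually.of_forall fun x => ?_)
    simp only [hv'_def, hu_def]; ring
  have rhs_eq : ∫ x, u' x * gpdf x = a * ∫ x, gpdf x * (1 - Real.tanh (a * x + h) ^ 2) := by
    rw [← integral_const_mul]
    refine integral_congr_ae (Filter.Eventually.of_forall fun x => ?_)
    simp only [hu'_def]; ring
  have key' : ∫ x, u x * v' x = - ∫ x, u' x * gpdf x := key
  rw [lhs_eq, rhs_eq] at key'
  linarith

/-- differentiation under the integral sign -/
lemma hasDerivAt_G (β h : ℝ) (hβ : 0 < β) {s₀ : ℝ} (hs₀ : 0 < s₀) :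
    HasDerivAt (fun s => ∫ x, gpdf x * Real.log (Real.cosh (β * Real.sqrt s * x + h)))
      (∫ x, gpdf x * (Real.tanh (β * Real.sqrt s₀ * x + h) * (β * x / (2 * Real.sqrt s₀)))) s₀ := by
  set F : ℝ → ℝ → ℝ := fun s x => gpdf x * Real.log (Real.cosh (β * Real.sqrt s * x + h))
  set F' : ℝ → ℝ → ℝ :=
    fun s x => gpdf x * (Real.tanh (β * Real.sqrt s * x + h) * (β * x / (2 * Real.sqrt s)))
  have hε : (0:ℝ) < s₀ / 2 := by linarith
  have hsqrt_pos : 0 < Real.sqrt (s₀ / 2) := Real.sqrt_pos.2 hε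
  have hball : ∀ s ∈ Metric.ball s₀ (s₀/2), s₀ / 2 < s := by
    intro s hs
    rw [Metric.mem_ball, Real.dist_eq, abs_lt] at hs
    linarith [hs.1]
  have hmeas : ∀ s : ℝ, AEStronglyMeasurable (F s) volume := by
    intro s
    have hc : Continuous fun x : ℝ => β * Real.sqrt s * x + h :=
      (continuous_const.mul continuous_id).add continuous_const
    exact (gpdf_cont.mul (cont_logcosh.comp hc)).aestronglyMeasurable
  have hFint : Integrable (F s₀) := by
    refine (int_gpdf.const_mul |h| |>.add (int_abs_gpdf.const_mul (β * Real.sqrt s₀))).mono'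
      (hmeas s₀) (Filter.Eventually.of_forall fun x => ?_)
    rw [Real.norm_eq_abs, abs_mul, abs_of_nonneg (gpdf_nonneg x),
      abs_of_nonneg (logcosh_nonneg _)]
    have h1 : Real.log (Real.cosh (β * Real.sqrt s₀ * x + h)) ≤ |h| + β * Real.sqrt s₀ * |x| := by
      refine (logcosh_le_abs _).trans ?_
      calc |β * Real.sqrt s₀ * x + h| ≤ |β * Real.sqrt s₀ * x| + |h| := abs_add_le _ _
        _ = β * Real.sqrt s₀ * |x| + |h| := by
            rw [abs_mul, abs_of_nonneg (by positivity : (0:ℝ) ≤ β * Real.sqrt s₀)]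
        _ = |h| + β * Real.sqrt s₀ * |x| := by ring
    calc gpdf x * Real.log (Real.cosh (β * Real.sqrt s₀ * x + h))
        ≤ gpdf x * (|h| + β * Real.sqrt s₀ * |x|) :=
          mul_le_mul_of_nonneg_left h1 (gpdf_nonneg x)
      _ = |h| * gpdf x + β * Real.sqrt s₀ * (|x| * gpdf x) := by ring
  have hF'meas : AEStronglyMeasurable (F' s₀) volume := by
    refine (gpdf_cont.mul ?_).aestronglyMeasurable
    refine ((cont_tanh.comp (by continuity)).mul ?_)
    continuity
  set bound : ℝ → ℝ := fun x => gpdf x * (β * |x| / (2 * Real.sqrt (s₀/2)))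
  have hbound_int : Integrable bound := by
    have := int_abs_gpdf.const_mul (β / (2 * Real.sqrt (s₀/2)))
    refine this.congr (Filter.Eventually.of_forall fun x => ?_)
    simp only [bound]; ring
  have h_bound : ∀ᵐ x ∂(volume : Measure ℝ), ∀ s ∈ Metric.ball s₀ (s₀/2), ‖F' s x‖ ≤ bound x := by
    refine Filter.Eventually.of_forall fun x => fun s hs => ?_
    have hspos : 0 < s := lt_trans hε (hball s hs)
    have hsq : Real.sqrt (s₀/2) ≤ Real.sqrt s := Real.sqrt_le_sqrt (hball s hs).le
    have hsqs : 0 < Real.sqrt s := Real.sqrt_pos.2 hspos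
    rw [Real.norm_eq_abs, abs_mul, abs_of_nonneg (gpdf_nonneg x)]
    simp only [bound]
    refine mul_le_mul_of_nonneg_left ?_ (gpdf_nonneg x)
    rw [abs_mul]
    calc |Real.tanh (β * Real.sqrt s * x + h)| * |β * x / (2 * Real.sqrt s)|
        ≤ 1 * |β * x / (2 * Real.sqrt s)| :=
          mul_le_mul_of_nonneg_right (abs_tanh_le_one _) (abs_nonneg _)
      _ = β * |x| / (2 * Real.sqrt s) := by
          rw [one_mul, abs_div, abs_mul, abs_of_nonneg hβ.le,
            abs_of_nonneg (by positivity : (0:ℝ) ≤ 2 * Real.sqrt s)]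
      _ ≤ β * |x| / (2 * Real.sqrt (s₀/2)) := by
          apply div_le_div_of_nonneg_left (by positivity) (by positivity)
          linarith
  have h_diff : ∀ᵐ x ∂(volume : Measure ℝ), ∀ s ∈ Metric.ball s₀ (s₀/2),
      HasDerivAt (fun s => F s x) (F' s x) s := by
    refine Filter.Eventually.of_forall fun x => fun s hs => ?_
    have hspos : 0 < s := lt_trans hε (hball s hs)
    have hinner : HasDerivAt (fun s : ℝ => β * Real.sqrt s * x + h)
        (β * (1 / (2 * Real.sqrt s)) * x) s :=
      (((Real.hasDerivAt_sqrt hspos.ne').const_mul β).mul_const x).add_const h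
    have hcomp := ((logcosh_hasDerivAt (β * Real.sqrt s * x + h)).comp s hinner).const_mul (gpdf x)
    refine hcomp.congr_deriv ?_
    simp only [F']
    ring
  have := hasDerivAt_integral_of_dominated_loc_of_deriv_le (Metric.ball_mem_nhds s₀ hε) (Filter.Eventually.of_forall hmeas)
    hFint hF'meas h_bound hbound_int h_diff
  exact this.2



lemma hxi0 (p : ℕ) (C : ℝ) (r : ℝ) (hp : 3 ≤ p) :
    HasDerivAt (fun r : ℝ => r ^ 2 / 2 + (C * r) ^ p / p) (r + C * (C * r) ^ (p - 1)) r := by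
  have hpne : (p : ℝ) ≠ 0 := Nat.cast_ne_zero.2 (by omega)
  have h1 : HasDerivAt (fun r : ℝ => r ^ 2 / 2) r r := by
    have := (hasDerivAt_pow 2 r).div_const 2
    exact this.congr_deriv (by push_cast; ring)
  have hlin : HasDerivAt (fun r : ℝ => C * r) C r := by
    simpa using (hasDerivAt_id r).const_mul C
  have h2 : HasDerivAt (fun r : ℝ => (C * r) ^ p) ((p : ℝ) * (C * r) ^ (p - 1) * C) r :=
    (hasDerivAt_pow p (C * r)).comp r hlin
  have h3 := h2.div_const (p : ℝ)
  refine (h1.add h3).congr_deriv ?_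
  field_simp

lemma hxi1 (p : ℕ) (C : ℝ) (r : ℝ) (hp : 3 ≤ p) :
    HasDerivAt (fun r : ℝ => r + C * (C * r) ^ (p - 1))
      (1 + C * (((p - 1 : ℕ) : ℝ) * (C * r) ^ (p - 1 - 1) * C)) r := by
  have hlin : HasDerivAt (fun r : ℝ => C * r) C r := by
    simpa using (hasDerivAt_id r).const_mul C
  have h2 : HasDerivAt (fun r : ℝ => (C * r) ^ (p - 1))
      (((p - 1 : ℕ) : ℝ) * (C * r) ^ (p - 1 - 1) * C) r :=
    (hasDerivAt_pow (p - 1) (C * r)).comp r hlin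
  exact (hasDerivAt_id r).add (h2.const_mul C)

end Stmt9Aux

open Stmt9Aux

/-- For `p ≥ 3`, `C > 0`, `β > 0`, `h ∈ ℝ`, `ξ₀ r = r²/2 + (C r)^p/p` and the RS functional
`F_RS(q) = E[log cosh(β √(ξ₀'(q)) Z + h)] + (β²/2)(ξ₀(1) - ξ₀(q) - (1-q) ξ₀'(q))`,
the map `q ↦ F_RS(q)` is differentiable on `(0,1)` with derivative
`(β² ξ₀''(q)/2) (q - E[tanh²(β √(ξ₀'(q)) Z + h)])` at every `q ∈ (0,1)`. -/
theorem stmt_9 (p : ℕ) (hp : 3 ≤ p) (C β h : ℝ) (hC : 0 < C) (hβ : 0 < β) :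
    let ξ₀ : ℝ → ℝ := fun r => r ^ 2 / 2 + (C * r) ^ p / p
    let F : ℝ → ℝ := fun q =>
      (∫ x, Real.log (Real.cosh (β * Real.sqrt (deriv ξ₀ q) * x + h)) ∂(gaussianReal 0 1))
        + β ^ 2 / 2 * (ξ₀ 1 - ξ₀ q - (1 - q) * deriv ξ₀ q)
    ∀ q ∈ Set.Ioo (0 : ℝ) 1,
      HasDerivAt F
        (β ^ 2 * deriv (deriv ξ₀) q / 2 *
          (q - ∫ x, Real.tanh (β * Real.sqrt (deriv ξ₀ q) * x + h) ^ 2 ∂(gaussianReal 0 1)))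
        q := by
  intro ξ₀ F q hq
  obtain ⟨hq0, hq1⟩ := hq
  set ξ₁ : ℝ → ℝ := fun r => r + C * (C * r) ^ (p - 1) with hξ₁def
  set ξ₂ : ℝ → ℝ := fun r => 1 + C * (((p - 1 : ℕ) : ℝ) * (C * r) ^ (p - 1 - 1) * C) with hξ₂def
  have hd1 : deriv ξ₀ = ξ₁ := funext fun r => (hxi0 p C r hp).deriv
  have hd2 : deriv (deriv ξ₀) q = ξ₂ q := by rw [hd1]; exact (hxi1 p C q hp).deriv
  have hs₀ : 0 < ξ₁ q := by
    have : (0:ℝ) < C * (C * q) ^ (p - 1) := by positivity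
    simp only [hξ₁def]; linarith
  set s₀ : ℝ := ξ₁ q with hs₀def
  have hsqrt : 0 < Real.sqrt s₀ := Real.sqrt_pos.2 hs₀
  set T : ℝ := ∫ x, gpdf x * Real.tanh (β * Real.sqrt s₀ * x + h) ^ 2 with hTdef
  -- derivative of the Gaussian integral part, simplified via IBP
  have hGd := hasDerivAt_G β h hβ hs₀
  have hD : (∫ x, gpdf x *
        (Real.tanh (β * Real.sqrt s₀ * x + h) * (β * x / (2 * Real.sqrt s₀))))
      = β ^ 2 / 2 * (1 - T) := by
    have stepA : (∫ x, gpdf x *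
          (Real.tanh (β * Real.sqrt s₀ * x + h) * (β * x / (2 * Real.sqrt s₀))))
        = β / (2 * Real.sqrt s₀) *
            ∫ x, gpdf x * (x * Real.tanh (β * Real.sqrt s₀ * x + h)) := by
      rw [← integral_const_mul]
      exact integral_congr_ae (Filter.Eventually.of_forall fun x => by ring)
    have stepB := ibp (β * Real.sqrt s₀) h
    have stepC : (∫ x, gpdf x * (1 - Real.tanh (β * Real.sqrt s₀ * x + h) ^ 2))
        = 1 - T := by
      have hint2 : Integrable (fun x => gpdf x * Real.tanh (β * Real.sqrt s₀ * x + h) ^ 2) := by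
        have := integrable_bdd (g := fun x => Real.tanh (β * Real.sqrt s₀ * x + h) ^ 2)
          ((cont_tanh.comp ((continuous_const.mul continuous_id).add continuous_const)).pow 2)
          1 (fun x => by
            rw [abs_of_nonneg (sq_nonneg _)]; exact tanh_sq_le_one _)
        exact this.congr (Filter.Eventually.of_forall fun x => by ring)
      have heq : (fun x => gpdf x * (1 - Real.tanh (β * Real.sqrt s₀ * x + h) ^ 2))
          = fun x => gpdf x - gpdf x * Real.tanh (β * Real.sqrt s₀ * x + h) ^ 2 := by
        funext x; ring
      rw [heq, integral_sub int_gpdf hint2, hTdef]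
      have : ∫ x, gpdf x = 1 := integral_gaussianPDFReal_eq_one 0 one_ne_zero
      rw [this]
    rw [stepA, stepB, stepC]
    have : β / (2 * Real.sqrt s₀) * (β * Real.sqrt s₀) = β ^ 2 / 2 := by
      field_simp
    rw [← mul_assoc, this]
  rw [hD] at hGd
  -- chain rule
  have hcomp : HasDerivAt
      (fun q' : ℝ => ∫ x, gpdf x * Real.log (Real.cosh (β * Real.sqrt (ξ₁ q') * x + h)))
      (β ^ 2 / 2 * (1 - T) * ξ₂ q) q :=
      HasDerivAt.comp (𝕜' := ℝ)
        (h₂ := fun s => ∫ x, gpdf x * Real.log (Real.cosh (β * Real.sqrt s * x + h))) q hGd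
        (hxi1 p C q hp)
  -- polynomial part
  have hpoly : HasDerivAt
      (fun q' : ℝ => β ^ 2 / 2 * (ξ₀ 1 - ξ₀ q' - (1 - q') * ξ₁ q'))
      (β ^ 2 / 2 * ((0 - ξ₁ q) - ((0 - 1) * ξ₁ q + (1 - q) * ξ₂ q))) q := by
    have hA : HasDerivAt (fun q' : ℝ => ξ₀ 1 - ξ₀ q') (0 - ξ₁ q) q :=
      (hasDerivAt_const q (ξ₀ 1)).sub (hxi0 p C q hp)
    have hB : HasDerivAt (fun q' : ℝ => (1 - q') * ξ₁ q')
        ((0 - 1) * ξ₁ q + (1 - q) * ξ₂ q) q :=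
      ((hasDerivAt_const q (1:ℝ)).sub (hasDerivAt_id q)).mul (hxi1 p C q hp)
    exact (hA.sub hB).const_mul _
  -- rewrite F
  have hFeq : F = fun q' : ℝ =>
      (∫ x, gpdf x * Real.log (Real.cosh (β * Real.sqrt (ξ₁ q') * x + h)))
        + β ^ 2 / 2 * (ξ₀ 1 - ξ₀ q' - (1 - q') * ξ₁ q') := by
    funext q'
    simp only [F, hd1]
    rw [integral_gauss]
  rw [hFeq]
  have htot := hcomp.add hpoly
  have hTγ : (∫ x, Real.tanh (β * Real.sqrt (deriv ξ₀ q) * x + h) ^ 2 ∂(gaussianReal 0 1))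
      = T := by
    rw [hd1, integral_gauss, hTdef]
  refine htot.congr_deriv ?_
  rw [hd2, hTγ]
  ring
end
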